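/- arXiv:1507.07460 — 3 statements merged into one kernel-verified Lean document; each statement's English description precedes it below -/
import Mathlib

section
/- Let A be a nonnegative weakly irreducible tensor of order m and dimension n, and let g be the girth of G_A. Then rho(A) = min over positive diagonal matrices X of (prod of the g largest slice sums of X^{-(m-1)} A X)^{1/g}, and rho(A) = max over positive diagonal matrices X of (prod of the g smallest slice sums of X^{-(m-1)} A X)^{1/g}. -/
open scoped BigOperators
open Finset

/-- The arc relation of the digraph `G_A` of an order-`m` dimension-`n` tensor `A`,
    whose entries are indexed by a head index and a tail of `m - 1` indices:
    `(i, j)` is an arc when some entry `a_{i i_2 ... i_m} ≠ 0` has `j` among `i_2, ..., i_m`. -/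
def tArc (m n : ℕ) (A : Fin n → (Fin (m - 1) → Fin n) → ℝ) (i j : Fin n) : Prop :=
  ∃ t : Fin (m - 1) → Fin n, A i t ≠ 0 ∧ j ∈ Set.range t

/-- A digraph (given by its arc relation) is strongly connected. -/
def StronglyConnected {n : ℕ} (arc : Fin n → Fin n → Prop) : Prop :=
  ∀ i j : Fin n, Relation.ReflTransGen arc i j

/-- `γ 0, γ 1, ..., γ p = γ 0` is a circuit (closed directed walk, loops allowed)
    of length `p` in the digraph with arc relation `arc`. -/
def IsCircuit {n : ℕ} (arc : Fin n → Fin n → Prop) (p : ℕ) (γ : ℕ → Fin n) : Prop :=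
  0 < p ∧ γ p = γ 0 ∧ ∀ j < p, arc (γ j) (γ (j + 1))

/-- `lam` is an eigenvalue of the order-`m` dimension-`n` real tensor `A`:
    there is a nonzero complex vector `x` with `A x^{m-1} = lam x^{[m-1]}`. -/
def IsEig (m n : ℕ) (A : Fin n → (Fin (m - 1) → Fin n) → ℝ) (lam : ℂ) : Prop :=
  ∃ x : Fin n → ℂ, x ≠ 0 ∧ ∀ i : Fin n,
    ∑ t : Fin (m - 1) → Fin n, (A i t : ℂ) * ∏ j, x (t j) = lam * x i ^ (m - 1)

/-- The spectral radius of a tensor: the supremum of moduli of its eigenvalues. -/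
noncomputable def specRad (m n : ℕ) (A : Fin n → (Fin (m - 1) → Fin n) → ℝ) : ℝ :=
  sSup {r : ℝ | ∃ lam : ℂ, IsEig m n A lam ∧ ‖lam‖ = r}

/-- The `i`-th slice sum `K_i = ∑_{i_2,...,i_m} a_{i i_2 ... i_m}`. -/
def sliceSum (m n : ℕ) (A : Fin n → (Fin (m - 1) → Fin n) → ℝ) (i : Fin n) : ℝ :=
  ∑ t : Fin (m - 1) → Fin n, A i t

/-- `(A x^{m-1})_i = ∑_{i_2,...,i_m} a_{i i_2 ... i_m} x_{i_2} ⋯ x_{i_m}`. -/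
def Ax (m n : ℕ) (A : Fin n → (Fin (m - 1) → Fin n) → ℝ) (x : Fin n → ℝ) (i : Fin n) : ℝ :=
  ∑ t : Fin (m - 1) → Fin n, A i t * ∏ j, x (t j)

/-! ### Auxiliary lemmas -/

section Aux

variable {m n : ℕ}

lemma exists_out_arc (A : Fin n → (Fin (m - 1) → Fin n) → ℝ)
    (hirr : StronglyConnected (tArc m n A)) (g : ℕ)
    (hg : IsLeast {p : ℕ | ∃ γ : ℕ → Fin n, IsCircuit (tArc m n A) p γ} g)
    (i : Fin n) : ∃ t, A i t ≠ 0 := by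
  obtain ⟨γ, hp, hclose, harcs⟩ := hg.1
  rcases (hirr i (γ 0)).cases_head with heq | ⟨c, hc, -⟩
  · obtain ⟨t, ht, -⟩ := harcs 0 hp
    exact ⟨t, by rwa [← heq] at ht⟩
  · obtain ⟨t, ht, -⟩ := hc
    exact ⟨t, ht⟩

lemma exists_path_bound (r : Fin n → Fin n → Prop) (h : StronglyConnected r) :
    ∃ L : ℕ, ∀ i j : Fin n, ∃ ℓ ≤ L, ∃ c : ℕ → Fin n,
      c 0 = i ∧ c ℓ = j ∧ ∀ k < ℓ, r (c k) (c (k + 1)) := by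
  have h' : ∀ i j : Fin n, ∃ ℓ, ∃ c : ℕ → Fin n,
      c 0 = i ∧ c ℓ = j ∧ ∀ k < ℓ, r (c k) (c (k + 1)) := by
    intro i j
    induction h i j with
    | refl => exact ⟨0, fun _ => i, rfl, rfl, fun k hk => absurd hk (Nat.not_lt_zero k)⟩
    | tail hab hbc ih =>
      obtain ⟨ℓ, c, h0, hl, harcs⟩ := ih
      rename_i b j'
      refine ⟨ℓ + 1, fun k => if k ≤ ℓ then c k else j', by simpa using h0, by simp, ?_⟩
      intro k hk
      rcases Nat.lt_or_ge k ℓ with hkl | hkl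
      · simpa [Nat.le_of_lt hkl, Nat.succ_le_of_lt hkl] using harcs k hkl
      · have hkeq : k = ℓ := by omega
        subst hkeq
        simpa [hl] using hbc
  classical
  choose len cfun hc0 hcl harcs using fun p : Fin n × Fin n => h' p.1 p.2
  refine ⟨Finset.univ.sup len, fun i j => ?_⟩
  exact ⟨len (i, j), Finset.le_sup (Finset.mem_univ (i, j)), cfun (i, j),
    hc0 (i, j), hcl (i, j), harcs (i, j)⟩

lemma sub_max {lam : ℝ} (hlam : 0 < lam) (K : Fin n → ℝ) (hK : ∀ i, 0 ≤ K i)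
    (g : ℕ) (hg : 0 < g) :
    ∀ N (u : Finset (Fin n)), u.card = N → g ≤ u.card → lam ^ u.card ≤ ∏ i ∈ u, K i →
      ∃ s : Finset (Fin n), s.card = g ∧ lam ^ g ≤ ∏ i ∈ s, K i := by
  intro N
  induction N using Nat.strong_induction_on with
  | _ N ih =>
    intro u hcard hgle hprod
    rcases eq_or_lt_of_le hgle with heq | hlt
    · exact ⟨u, heq.symm, by rwa [← heq] at hprod⟩
    · by_cases hall : ∀ i ∈ u, lam ≤ K i
      · obtain ⟨s, hsub, hscard⟩ := Finset.exists_subset_card_eq hgle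
        refine ⟨s, hscard, ?_⟩
        calc lam ^ g = ∏ _i ∈ s, lam := by rw [Finset.prod_const, hscard]
        _ ≤ ∏ i ∈ s, K i := Finset.prod_le_prod (fun _ _ => hlam.le)
            (fun i hi => hall i (hsub hi))
      · push_neg at hall
        obtain ⟨i, hiu, hKi⟩ := hall
        have hNpos : 0 < N := by omega
        have hcard' : (u.erase i).card = N - 1 := by
          rw [Finset.card_erase_of_mem hiu, hcard]
        have hsplit : K i * ∏ j ∈ u.erase i, K j = ∏ j ∈ u, K j :=
          Finset.mul_prod_erase u K hiu
        have hprod' : lam ^ (u.erase i).card ≤ ∏ j ∈ u.erase i, K j := by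
          have h1 : lam * lam ^ (N - 1) ≤ lam * ∏ j ∈ u.erase i, K j := by
            calc lam * lam ^ (N - 1) = lam ^ N := by
                  rw [← pow_succ']; congr 1; omega
            _ ≤ ∏ j ∈ u, K j := by rwa [hcard] at hprod
            _ = K i * ∏ j ∈ u.erase i, K j := hsplit.symm
            _ ≤ lam * ∏ j ∈ u.erase i, K j :=
                mul_le_mul_of_nonneg_right hKi.le
                  (Finset.prod_nonneg fun j _ => hK j)
          rw [hcard']
          exact le_of_mul_le_mul_left h1 hlam
        exact ih (N - 1) (by omega) (u.erase i) hcard' (by omega) hprod'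

lemma sub_min {lam : ℝ} (hlam : 0 < lam) (K : Fin n → ℝ) (hK : ∀ i, 0 ≤ K i)
    (g : ℕ) (hg : 0 < g) :
    ∀ N (u : Finset (Fin n)), u.card = N → g ≤ u.card → (∏ i ∈ u, K i) ≤ lam ^ u.card →
      ∃ s : Finset (Fin n), s.card = g ∧ (∏ i ∈ s, K i) ≤ lam ^ g := by
  intro N
  induction N using Nat.strong_induction_on with
  | _ N ih =>
    intro u hcard hgle hprod
    rcases eq_or_lt_of_le hgle with heq | hlt
    · exact ⟨u, heq.symm, by rwa [← heq] at hprod⟩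
    · by_cases hall : ∀ i ∈ u, K i ≤ lam
      · obtain ⟨s, hsub, hscard⟩ := Finset.exists_subset_card_eq hgle
        refine ⟨s, hscard, ?_⟩
        calc ∏ i ∈ s, K i ≤ ∏ _i ∈ s, lam :=
              Finset.prod_le_prod (fun i _ => hK i) (fun i hi => hall i (hsub hi))
        _ = lam ^ g := by rw [Finset.prod_const, hscard]
      · push_neg at hall
        obtain ⟨i, hiu, hKi⟩ := hall
        have hcard' : (u.erase i).card = N - 1 := by
          rw [Finset.card_erase_of_mem hiu, hcard]
        have hsplit : K i * ∏ j ∈ u.erase i, K j = ∏ j ∈ u, K j :=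
          Finset.mul_prod_erase u K hiu
        have hprod' : (∏ j ∈ u.erase i, K j) ≤ lam ^ (u.erase i).card := by
          have h1 : lam * ∏ j ∈ u.erase i, K j ≤ lam * lam ^ (N - 1) := by
            calc lam * ∏ j ∈ u.erase i, K j ≤ K i * ∏ j ∈ u.erase i, K j :=
                  mul_le_mul_of_nonneg_right hKi.le
                    (Finset.prod_nonneg fun j _ => hK j)
            _ = ∏ j ∈ u, K j := hsplit
            _ ≤ lam ^ N := by rwa [hcard] at hprod
            _ = lam * lam ^ (N - 1) := by rw [← pow_succ']; congr 1; omega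
          rw [hcard']
          exact le_of_mul_le_mul_left h1 hlam
        exact ih (N - 1) (by omega) (u.erase i) hcard' (by omega) hprod'

lemma cycle_shift_prod {α : Type*} (c : ℕ → α) (P : ℕ) (hc : c P = c 0)
    (h : α → ℝ) (h0 : h (c 0) ≠ 0) :
    ∏ k ∈ Finset.range P, h (c (k + 1)) = ∏ k ∈ Finset.range P, h (c k) := by
  have h1 : (∏ k ∈ Finset.range P, h (c (k + 1))) * h (c 0)
      = (∏ k ∈ Finset.range P, h (c k)) * h (c 0) := by
    rw [← Finset.prod_range_succ' (fun k => h (c k)) P, Finset.prod_range_succ, hc]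
  exact mul_right_cancel₀ h0 h1

lemma exists_cycle (hn : 0 < n) (f : Fin n → Fin n) :
    ∃ (y : Fin n) (P : ℕ), 0 < P ∧ P ≤ n ∧ f^[P] y = y ∧
      ∀ k l, k < l → l < P → f^[k] y ≠ f^[l] y := by
  classical
  set i₀ : Fin n := ⟨0, hn⟩
  obtain ⟨a, b, hab, heq⟩ := Fintype.exists_ne_map_eq_of_card_lt
    (fun k : Fin (n + 1) => f^[(k : ℕ)] i₀) (by simp)
  wlog hlt : (a : ℕ) < (b : ℕ) generalizing a b
  · exact this b a hab.symm heq.symm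
      (by rcases Nat.lt_or_ge (b : ℕ) (a : ℕ) with h | h
          · exact h
          · exact absurd (Fin.ext (by omega)) hab)
  set y : Fin n := f^[(a : ℕ)] i₀ with hy
  have hper : f^[(b : ℕ) - (a : ℕ)] y = y := by
    rw [hy, ← Function.iterate_add_apply]
    have : (b : ℕ) - (a : ℕ) + (a : ℕ) = (b : ℕ) := by omega
    rw [this, ← heq]
  have hEx : ∃ P, 0 < P ∧ f^[P] y = y := ⟨(b : ℕ) - (a : ℕ), by omega, hper⟩
  classical
  set P := Nat.find hEx with hP
  obtain ⟨hP0, hPfix⟩ := Nat.find_spec hEx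
  have hPle : P ≤ (b : ℕ) - (a : ℕ) := Nat.find_min' hEx ⟨by omega, hper⟩
  refine ⟨y, P, hP0, by omega, hPfix, ?_⟩
  intro k l hkl hlP hkleq
  have hfix' : f^[P - l + k] y = y := by
    rw [Function.iterate_add_apply, hkleq, ← Function.iterate_add_apply]
    have : P - l + l = P := by omega
    rw [this, hPfix]
  have hlt' : P - l + k < P := by omega
  exact Nat.find_min hEx hlt' ⟨by omega, hfix'⟩

lemma perron_approx (hd1 : 1 ≤ m - 1) (A : Fin n → (Fin (m - 1) → Fin n) → ℝ)
    (hA : ∀ i t, 0 ≤ A i t) (harc : ∀ i, ∃ t, A i t ≠ 0)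
    (θ : ℝ) (hθ0 : 0 < θ) (hθ1 : θ < 1) :
    ∃ z : Fin n → ℝ, ∀ i, ((m - 1 : ℕ) : ℝ) * z i
      = θ * Real.log (∑ t : Fin (m - 1) → Fin n, A i t * Real.exp (∑ j, z (t j))) := by
  classical
  set S : (Fin n → ℝ) → Fin n → ℝ :=
    fun z i => ∑ t : Fin (m - 1) → Fin n, A i t * Real.exp (∑ j, z (t j)) with hS
  have hSpos : ∀ z i, 0 < S z i := by
    intro z i
    obtain ⟨t₀, ht₀⟩ := harc i
    apply Finset.sum_pos' (fun t _ => mul_nonneg (hA i t) (Real.exp_pos _).le)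
    refine ⟨t₀, Finset.mem_univ _, ?_⟩
    exact mul_pos (lt_of_le_of_ne (hA i t₀) (Ne.symm ht₀)) (Real.exp_pos _)
  have hdpos : (0:ℝ) < ((m - 1 : ℕ) : ℝ) := by exact_mod_cast hd1
  set T : (Fin n → ℝ) → Fin n → ℝ :=
    fun z i => (θ / ((m - 1 : ℕ) : ℝ)) * Real.log (S z i) with hT
  have haux : ∀ z z' : Fin n → ℝ, ∀ i, T z i - T z' i ≤ θ * dist z z' := by
    intro z z' i
    have hlog : Real.log (S z i) ≤ Real.log (S z' i) + ((m - 1 : ℕ) : ℝ) * dist z z' := by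
      have hle : S z i ≤ S z' i * Real.exp (((m - 1 : ℕ) : ℝ) * dist z z') := by
        rw [hS]
        simp only
        rw [Finset.sum_mul]
        apply Finset.sum_le_sum
        intro t _
        rw [mul_assoc, ← Real.exp_add]
        apply mul_le_mul_of_nonneg_left _ (hA i t)
        apply Real.exp_le_exp.mpr
        calc (∑ j, z (t j)) ≤ ∑ j, (z' (t j) + dist z z') := by
              apply Finset.sum_le_sum
              intro j _
              have h1 : dist (z (t j)) (z' (t j)) ≤ dist z z' := dist_le_pi_dist z z' (t j)
              rw [Real.dist_eq] at h1
              have h2 := abs_le.mp h1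
              linarith [h2.2]
        _ = (∑ j, z' (t j)) + ((m - 1 : ℕ) : ℝ) * dist z z' := by
              rw [Finset.sum_add_distrib, Finset.sum_const, Finset.card_univ,
                Fintype.card_fin, nsmul_eq_mul]
      calc Real.log (S z i) ≤ Real.log (S z' i * Real.exp (((m - 1 : ℕ) : ℝ) * dist z z')) :=
            Real.log_le_log (hSpos z i) hle
      _ = Real.log (S z' i) + ((m - 1 : ℕ) : ℝ) * dist z z' := by
            rw [Real.log_mul (ne_of_gt (hSpos z' i)) (Real.exp_ne_zero _), Real.log_exp]
    calc T z i - T z' i = (θ / ((m - 1 : ℕ) : ℝ)) * (Real.log (S z i) - Real.log (S z' i)) := by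
          rw [hT]; ring
    _ ≤ (θ / ((m - 1 : ℕ) : ℝ)) * (((m - 1 : ℕ) : ℝ) * dist z z') := by
          apply mul_le_mul_of_nonneg_left _ (div_nonneg hθ0.le hdpos.le)
          linarith
    _ = θ * dist z z' := by
          field_simp
  have hlip : ∀ z z' : Fin n → ℝ, dist (T z) (T z') ≤ θ * dist z z' := by
    intro z z'
    rw [dist_pi_le_iff (mul_nonneg hθ0.le dist_nonneg)]
    intro i
    rw [Real.dist_eq, abs_le]
    constructor
    · have := haux z' z i
      rw [dist_comm] at this
      linarith
    · exact haux z z' i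
  set K : NNReal := ⟨θ, hθ0.le⟩ with hK
  have hcontr : ContractingWith K T := by
    constructor
    · rw [← NNReal.coe_lt_coe]
      exact hθ1
    · exact LipschitzWith.of_dist_le_mul hlip
  obtain ⟨z, hzfix, -⟩ := hcontr.exists_fixedPoint (fun _ => 0) (edist_ne_top _ _)
  refine ⟨z, fun i => ?_⟩
  have h1 : z i = (θ / ((m - 1 : ℕ) : ℝ)) * Real.log (S z i) := (congrFun hzfix i).symm
  rw [h1]
  field_simp
  rfl

lemma path_recursion {n : ℕ} (d L : ℕ) (hd : 1 ≤ d) (q b U : ℝ)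
    (hq1 : 1 ≤ q) (hqd : (d : ℝ) ≤ q) (hb : 0 ≤ b) (hU0 : 0 ≤ U)
    (u : Fin n → ℝ) (hu0 : ∀ i, 0 ≤ u i)
    (r : Fin n → Fin n → Prop)
    (H : ∀ i j, r i j → q * u i ≤ u j + ((d : ℝ) - 1) * U + b)
    (istar : Fin n) (hstar : u istar = 0)
    (imax : Fin n) (hmax : u imax = U)
    (hpath : ∃ ℓ ≤ L, ∃ c : ℕ → Fin n,
      c 0 = imax ∧ c ℓ = istar ∧ ∀ k < ℓ, r (c k) (c (k + 1))) :
    U ≤ (L : ℝ) * b * (d : ℝ) ^ L := by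
  obtain ⟨ℓ, hℓL, c, hc0, hcl, hcr⟩ := hpath
  have hdpos : (0:ℝ) < (d:ℝ) := by exact_mod_cast hd
  have hqpos : (0:ℝ) < q := lt_of_lt_of_le one_pos hq1
  have hinv0 : (0:ℝ) ≤ (d:ℝ)⁻¹ := by positivity
  have hinv1 : (d:ℝ)⁻¹ ≤ 1 := by
    rw [inv_le_one_iff₀]
    right; exact_mod_cast hd
  have main : ∀ s, s ≤ ℓ → u (c (ℓ - s)) ≤ (s : ℝ) * b + (1 - ((d:ℝ)⁻¹) ^ s) * U := by
    intro s
    induction s with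
    | zero => intro _; simp [hcl, hstar]
    | succ s ih =>
      intro hs
      have ihs := ih (by omega)
      have hk : ℓ - (s + 1) < ℓ := by omega
      have harc := hcr (ℓ - (s + 1)) hk
      have hkk : ℓ - (s + 1) + 1 = ℓ - s := by omega
      rw [hkk] at harc
      have h1 : q * u (c (ℓ - (s + 1))) ≤ u (c (ℓ - s)) + ((d:ℝ) - 1) * U + b := H _ _ harc
      have hXle : q * u (c (ℓ - (s + 1)))
          ≤ (((s:ℝ)) * b + (1 - (d:ℝ)⁻¹ ^ s) * U) + ((d:ℝ) - 1) * U + b := by linarith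
      have hrs0 : (0:ℝ) ≤ (d:ℝ)⁻¹ ^ s := pow_nonneg hinv0 s
      have hrs1 : (d:ℝ)⁻¹ ^ s ≤ 1 := pow_le_one₀ hinv0 hinv1
      have hrs1' : (d:ℝ)⁻¹ ^ (s+1) ≤ 1 := pow_le_one₀ hinv0 hinv1
      have e1 : (1 - (d:ℝ)⁻¹ ^ s) * U + ((d:ℝ) - 1) * U = (d:ℝ) * ((1 - (d:ℝ)⁻¹ ^ (s+1)) * U) := by
        have hd' : (d:ℝ) * (d:ℝ)⁻¹ ^ (s+1) = (d:ℝ)⁻¹ ^ s := by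
          rw [pow_succ]
          field_simp
        have : (d:ℝ) * ((1 - (d:ℝ)⁻¹ ^ (s+1)) * U) = ((d:ℝ) - (d:ℝ) * (d:ℝ)⁻¹ ^ (s+1)) * U := by
          ring
        rw [this, hd']
        ring
      have key : (((s:ℝ)) * b + (1 - (d:ℝ)⁻¹ ^ s) * U) + ((d:ℝ) - 1) * U + b
          ≤ q * ((((s:ℝ) + 1)) * b + (1 - (d:ℝ)⁻¹ ^ (s+1)) * U) := by
        have hb1 : ((s:ℝ) + 1) * b ≤ q * (((s:ℝ) + 1) * b) := by
          nlinarith [mul_nonneg (Nat.cast_nonneg s : (0:ℝ) ≤ (s:ℝ)) hb]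
        have hU1 : (d:ℝ) * ((1 - (d:ℝ)⁻¹ ^ (s+1)) * U) ≤ q * ((1 - (d:ℝ)⁻¹ ^ (s+1)) * U) := by
          apply mul_le_mul_of_nonneg_right hqd
          exact mul_nonneg (by linarith) hU0
        calc (((s:ℝ)) * b + (1 - (d:ℝ)⁻¹ ^ s) * U) + ((d:ℝ) - 1) * U + b
            = ((s:ℝ) + 1) * b + ((1 - (d:ℝ)⁻¹ ^ s) * U + ((d:ℝ) - 1) * U) := by ring
        _ = ((s:ℝ) + 1) * b + (d:ℝ) * ((1 - (d:ℝ)⁻¹ ^ (s+1)) * U) := by rw [e1]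
        _ ≤ q * (((s:ℝ) + 1) * b) + q * ((1 - (d:ℝ)⁻¹ ^ (s+1)) * U) := by
              exact add_le_add hb1 hU1
        _ = q * ((((s:ℝ) + 1)) * b + (1 - (d:ℝ)⁻¹ ^ (s+1)) * U) := by ring
      have := le_trans hXle key
      have h2 := le_of_mul_le_mul_left this hqpos
      have hcast : ((s + 1 : ℕ) : ℝ) = (s : ℝ) + 1 := by push_cast; ring
      rw [hcast]
      exact h2
  have hfin := main ℓ le_rfl
  rw [Nat.sub_self, hc0, hmax] at hfin
  -- U ≤ ℓ b + (1 - r^ℓ) U  ⇒  r^ℓ U ≤ ℓ b ⇒ U ≤ ℓ b d^ℓ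
  have hrl : (0:ℝ) < (d:ℝ)⁻¹ ^ ℓ := pow_pos (by positivity) ℓ
  have h3 : (d:ℝ)⁻¹ ^ ℓ * U ≤ (ℓ:ℝ) * b := by linarith
  have h4 : U ≤ (ℓ:ℝ) * b * (d:ℝ) ^ ℓ := by
    have hcancel : ((d:ℝ)⁻¹) ^ ℓ * (d:ℝ) ^ ℓ = 1 := by
      rw [← mul_pow, inv_mul_cancel₀ (ne_of_gt hdpos), one_pow]
    calc U = ((d:ℝ)⁻¹ ^ ℓ * (d:ℝ) ^ ℓ) * U := by rw [hcancel, one_mul]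
    _ = ((d:ℝ)⁻¹ ^ ℓ * U) * (d:ℝ) ^ ℓ := by ring
    _ ≤ ((ℓ:ℝ) * b) * (d:ℝ) ^ ℓ :=
        mul_le_mul_of_nonneg_right h3 (le_of_lt (pow_pos hdpos ℓ))
  calc U ≤ (ℓ:ℝ) * b * (d:ℝ) ^ ℓ := h4
  _ ≤ (L:ℝ) * b * (d:ℝ) ^ L := by
      apply mul_le_mul
      · exact mul_le_mul_of_nonneg_right (by exact_mod_cast hℓL) hb
      · exact pow_le_pow_right₀ (by exact_mod_cast hd) hℓL
      · positivity
      · positivity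

set_option maxHeartbeats 1000000 in
lemma exists_perron (hm : 2 ≤ m) (hn : 0 < n)
    (A : Fin n → (Fin (m - 1) → Fin n) → ℝ) (hA : ∀ i t, 0 ≤ A i t)
    (harc : ∀ i, ∃ t, A i t ≠ 0)
    (hirr : StronglyConnected (tArc m n A)) :
    ∃ (v : Fin n → ℝ) (lam : ℝ), (∀ i, 0 < v i) ∧ 0 < lam ∧
      ∀ i, Ax m n A v i = lam * v i ^ (m - 1) := by
  classical
  have hd1 : 1 ≤ m - 1 := by omega
  have hdR : (1:ℝ) ≤ ((m - 1 : ℕ) : ℝ) := by exact_mod_cast hd1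
  have hdR0 : (0:ℝ) < ((m - 1 : ℕ) : ℝ) := by linarith
  set i₀ : Fin n := ⟨0, hn⟩ with hi₀
  -- the minimal nonzero entry
  set Pset : Finset (Fin n × (Fin (m - 1) → Fin n)) :=
    Finset.univ.filter (fun p => A p.1 p.2 ≠ 0) with hPset
  have hPne : Pset.Nonempty := by
    obtain ⟨t, ht⟩ := harc i₀
    exact ⟨(i₀, t), Finset.mem_filter.mpr ⟨Finset.mem_univ _, ht⟩⟩
  set amin : ℝ := Pset.inf' hPne (fun p => A p.1 p.2) with hamin
  have hamin_pos : 0 < amin := by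
    obtain ⟨p, hp, hpe⟩ := Finset.exists_mem_eq_inf' hPne (fun p => A p.1 p.2)
    rw [hamin, hpe]
    have := (Finset.mem_filter.mp hp).2
    exact lt_of_le_of_ne (hA p.1 p.2) (Ne.symm this)
  have hamin_le : ∀ i t, A i t ≠ 0 → amin ≤ A i t := by
    intro i t h
    exact Finset.inf'_le _ (Finset.mem_filter.mpr ⟨Finset.mem_univ (i, t), h⟩)
  -- max slice sum
  set Kmax : ℝ := Finset.univ.sup' ⟨i₀, Finset.mem_univ _⟩
    (fun i => ∑ t : Fin (m - 1) → Fin n, A i t) with hKmax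
  have hKmax_le : ∀ i, (∑ t : Fin (m - 1) → Fin n, A i t) ≤ Kmax := fun i => by
    exact Finset.le_sup' (f := fun i => ∑ t : Fin (m - 1) → Fin n, A i t)
      (b := i) (Finset.mem_univ i)
  have hslice : ∀ i, amin ≤ ∑ t : Fin (m - 1) → Fin n, A i t := by
    intro i
    obtain ⟨t, ht⟩ := harc i
    calc amin ≤ A i t := hamin_le i t ht
    _ ≤ ∑ t : Fin (m - 1) → Fin n, A i t :=
        Finset.single_le_sum (fun t' _ => hA i t') (Finset.mem_univ t)
  have haK : amin ≤ Kmax := le_trans (hslice i₀) (hKmax_le i₀)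
  have hKpos : 0 < Kmax := lt_of_lt_of_le hamin_pos haK
  set b : ℝ := Real.log Kmax - Real.log amin with hb
  have hb0 : 0 ≤ b := by
    rw [hb, sub_nonneg]
    exact Real.log_le_log hamin_pos haK
  obtain ⟨L, hL⟩ := exists_path_bound (tArc m n A) hirr
  set M₀ : ℝ := (L : ℝ) * b * ((m - 1 : ℕ) : ℝ) ^ L with hM₀
  have hM₀0 : 0 ≤ M₀ := by positivity
  set c₀ : ℝ := Real.exp (-M₀) with hc₀
  have hc₀pos : 0 < c₀ := Real.exp_pos _
  have hc₀le1 : c₀ ≤ 1 := Real.exp_le_one_iff.mpr (by linarith)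
  -- the approximating eigenpairs
  have hstep : ∀ k : ℕ, ∃ (y : Fin n → ℝ) (ν q : ℝ),
      (∀ i, c₀ ≤ y i) ∧ (∀ i, 0 < y i) ∧ (∀ i, y i ≤ 1) ∧
      (amin * c₀ ^ (m - 1) ≤ ν) ∧ (ν ≤ Kmax) ∧
      (((m - 1 : ℕ) : ℝ) ≤ q) ∧ (q ≤ ((m - 1 : ℕ) : ℝ) * (1 + 1 / (k + 1))) ∧
      (∀ i, Ax m n A y i = ν * y i ^ q) := by
    intro k
    set θ : ℝ := (k + 1 : ℝ) / (k + 2) with hθ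
    have hθ0 : 0 < θ := by positivity
    have hθ1 : θ < 1 := by
      rw [hθ, div_lt_one (by positivity)]
      linarith
    obtain ⟨z, hz⟩ := perron_approx hd1 A hA harc θ hθ0 hθ1
    have hSpos : ∀ i, 0 < ∑ t : Fin (m - 1) → Fin n, A i t * Real.exp (∑ j, z (t j)) := by
      intro i
      obtain ⟨t₀, ht₀⟩ := harc i
      apply Finset.sum_pos' (fun t _ => mul_nonneg (hA i t) (Real.exp_pos _).le)
      exact ⟨t₀, Finset.mem_univ _,
        mul_pos (lt_of_le_of_ne (hA i t₀) (Ne.symm ht₀)) (Real.exp_pos _)⟩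
    set M : ℝ := Finset.univ.sup' ⟨i₀, Finset.mem_univ _⟩ z with hM
    have hzM : ∀ i, z i ≤ M := fun i => Finset.le_sup' _ (Finset.mem_univ i)
    obtain ⟨istar, -, histar⟩ := Finset.exists_mem_eq_sup' ⟨i₀, Finset.mem_univ _⟩ z
    set q : ℝ := ((m - 1 : ℕ) : ℝ) / θ with hq
    have hqd : ((m - 1 : ℕ) : ℝ) ≤ q := by
      rw [hq, le_div_iff₀ hθ0]
      nlinarith
    have hq1 : (1:ℝ) ≤ q := le_trans hdR hqd
    have hq0 : 0 < q := by linarith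
    have hqup : q ≤ ((m - 1 : ℕ) : ℝ) * (1 + 1 / (k + 1)) := by
      apply le_of_eq
      rw [hq, hθ]
      have h1 : ((k:ℝ) + 1) ≠ 0 := by positivity
      have h2 : ((k:ℝ) + 2) ≠ 0 := by positivity
      field_simp
      try ring
      try exact Or.inl trivial
    set ν : ℝ := Real.exp ((q - ((m - 1 : ℕ) : ℝ)) * M) with hν
    have hνpos : 0 < ν := Real.exp_pos _
    set y : Fin n → ℝ := fun i => Real.exp (z i - M) with hy
    have hypos : ∀ i, 0 < y i := fun i => Real.exp_pos _
    have hyle1 : ∀ i, y i ≤ 1 := by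
      intro i
      show Real.exp (z i - M) ≤ 1
      rw [Real.exp_le_one_iff]
      have := hzM i
      linarith
    have hystar : y istar = 1 := by
      show Real.exp (z istar - M) = 1
      rw [hM, ← histar, sub_self, Real.exp_zero]
    -- the fixed point equation in multiplicative form
    have hSeq : ∀ i, (∑ t : Fin (m - 1) → Fin n, A i t * Real.exp (∑ j, z (t j)))
        = Real.exp (q * z i) := by
      intro i
      have h1 := hz i
      have h2 : Real.log (∑ t : Fin (m - 1) → Fin n, A i t * Real.exp (∑ j, z (t j)))
          = q * z i := by
        rw [hq, div_mul_eq_mul_div, eq_div_iff (ne_of_gt hθ0)]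
        linarith [h1]
      rw [← h2, Real.exp_log (hSpos i)]
    have heq : ∀ i, Ax m n A y i = ν * y i ^ q := by
      intro i
      have hAx : Ax m n A y i
          = (∑ t : Fin (m - 1) → Fin n, A i t * Real.exp (∑ j, z (t j)))
            * Real.exp (-(((m - 1 : ℕ) : ℝ) * M)) := by
        rw [Ax, Finset.sum_mul]
        apply Finset.sum_congr rfl
        intro t _
        rw [mul_assoc, ← Real.exp_add]
        congr 1
        rw [hy]
        simp only
        rw [← Real.exp_sum]
        congr 1
        rw [Finset.sum_sub_distrib, Finset.sum_const, Finset.card_univ, Fintype.card_fin,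
          nsmul_eq_mul]
        ring
      rw [hAx, hSeq i]
      rw [hν, hy]
      simp only
      rw [← Real.exp_add, Real.rpow_def_of_pos (Real.exp_pos _), Real.log_exp,
        ← Real.exp_add]
      congr 1
      ring
    -- ν ≤ Kmax
    have hνK : ν ≤ Kmax := by
      have h1 := heq istar
      rw [hystar, Real.one_rpow, mul_one] at h1
      rw [← h1, Ax]
      calc (∑ t : Fin (m - 1) → Fin n, A istar t * ∏ j, y (t j))
          ≤ ∑ t : Fin (m - 1) → Fin n, A istar t := by
            apply Finset.sum_le_sum
            intro t _
            calc A istar t * ∏ j, y (t j) ≤ A istar t * 1 := by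
                  apply mul_le_mul_of_nonneg_left _ (hA istar t)
                  exact Finset.prod_le_one (fun j _ => (hypos _).le) (fun j _ => hyle1 _)
            _ = A istar t := mul_one _
      _ ≤ Kmax := hKmax_le istar
    -- the additive variables
    set u : Fin n → ℝ := fun i => M - z i with hu
    have hu0 : ∀ i, 0 ≤ u i := by
      intro i
      show (0:ℝ) ≤ M - z i
      linarith [hzM i]
    obtain ⟨imin, -, himin⟩ := Finset.exists_mem_eq_inf' ⟨i₀, Finset.mem_univ _⟩ z
    set U : ℝ := M - Finset.univ.inf' ⟨i₀, Finset.mem_univ _⟩ z with hU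
    have huU : ∀ i, u i ≤ U := by
      intro i
      show M - z i ≤ M - Finset.univ.inf' ⟨i₀, Finset.mem_univ _⟩ z
      have := Finset.inf'_le z (Finset.mem_univ i)
      linarith
    have hU0 : 0 ≤ U := by
      have h1 : U = u imin := by
        show M - Finset.univ.inf' ⟨i₀, Finset.mem_univ _⟩ z = M - z imin
        rw [himin]
      rw [h1]
      exact hu0 imin
    have hyU : ∀ i, Real.exp (-U) ≤ y i := by
      intro i
      show Real.exp (-U) ≤ Real.exp (z i - M)
      apply Real.exp_le_exp.mpr
      have : M - z i ≤ U := huU i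
      linarith
    -- the arc inequality
    have Hineq : ∀ i j, tArc m n A i j → q * u i ≤ u j + (((m - 1 : ℕ) : ℝ) - 1) * U + b := by
      intro i j harcij
      obtain ⟨t, hAt, j₀, hj₀⟩ := harcij
      have hprod : y j * Real.exp (-U) ^ (m - 1 - 1) ≤ ∏ j', y (t j') := by
        have h1 : (∏ j', y (t j'))
            = y (t j₀) * ∏ j' ∈ Finset.univ.erase j₀, y (t j') :=
          (Finset.mul_prod_erase Finset.univ _ (Finset.mem_univ j₀)).symm
        rw [h1, hj₀]
        apply mul_le_mul_of_nonneg_left _ (hypos j).le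
        calc Real.exp (-U) ^ (m - 1 - 1)
            = ∏ _j' ∈ Finset.univ.erase j₀, Real.exp (-U) := by
              rw [Finset.prod_const, Finset.card_erase_of_mem (Finset.mem_univ _),
                Finset.card_univ, Fintype.card_fin]
        _ ≤ ∏ j' ∈ Finset.univ.erase j₀, y (t j') :=
              Finset.prod_le_prod (fun j' _ => (Real.exp_pos _).le) (fun j' _ => hyU (t j'))
      have hkey : amin * (y j * Real.exp (-U) ^ (m - 1 - 1)) ≤ ν * y i ^ q := by
        rw [← heq i, Ax]
        calc amin * (y j * Real.exp (-U) ^ (m - 1 - 1))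
            ≤ A i t * ∏ j', y (t j') := by
              apply mul_le_mul (hamin_le i t hAt) hprod
              · exact mul_nonneg (hypos j).le (pow_nonneg (Real.exp_pos _).le _)
              · exact hA i t
        _ ≤ ∑ t' : Fin (m - 1) → Fin n, A i t' * ∏ j', y (t' j') :=
              Finset.single_le_sum (f := fun t' => A i t' * ∏ j', y (t' j'))
                (fun t' _ => mul_nonneg (hA i t')
                  (Finset.prod_nonneg fun j' _ => (hypos _).le))
                (Finset.mem_univ t)
      -- take logarithms
      have hLHSpos : 0 < amin * (y j * Real.exp (-U) ^ (m - 1 - 1)) := by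
        apply mul_pos hamin_pos
        exact mul_pos (hypos j) (pow_pos (Real.exp_pos _) _)
      have hlog := Real.log_le_log hLHSpos hkey
      rw [Real.log_mul (ne_of_gt hamin_pos)
          (ne_of_gt (mul_pos (hypos j) (pow_pos (Real.exp_pos _) _))),
        Real.log_mul (ne_of_gt (hypos j)) (ne_of_gt (pow_pos (Real.exp_pos _) _)),
        Real.log_pow, Real.log_exp,
        Real.log_mul (ne_of_gt hνpos) (ne_of_gt (Real.rpow_pos_of_pos (hypos i) q)),
        Real.log_rpow (hypos i)] at hlog
      have hlogy : ∀ i', Real.log (y i') = -(u i') := by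
        intro i'
        show Real.log (Real.exp (z i' - M)) = -(M - z i')
        rw [Real.log_exp]
        ring
      rw [Real.log_exp, hlogy i] at hlog
      have hlogν : Real.log ν ≤ Real.log Kmax := Real.log_le_log hνpos hνK
      have hcast : ((m - 1 - 1 : ℕ) : ℝ) = ((m - 1 : ℕ) : ℝ) - 1 := by
        rw [Nat.cast_sub hd1]
        norm_num
      rw [hcast] at hlog
      have huj : u j = M - z j := rfl
      rw [hb]
      linarith [hlog, hlogν, huj]
    -- apply the path recursion
    have hUbound : U ≤ M₀ := by
      rw [hM₀]
      apply path_recursion (m - 1) L hd1 q b U hq1 hqd hb0 hU0 u hu0 (tArc m n A) Hineq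
        istar (by rw [hu]; simp only; rw [← histar]; ring) imin
        (by rw [hu, hU]; simp only; rw [himin])
      obtain ⟨ℓ, hℓL, c, hc0, hcl, hcr⟩ := hL imin istar
      exact ⟨ℓ, hℓL, c, hc0, hcl, hcr⟩
    have hylow : ∀ i, c₀ ≤ y i := by
      intro i
      calc c₀ = Real.exp (-M₀) := by rw [hc₀]
      _ ≤ Real.exp (-U) := Real.exp_le_exp.mpr (by linarith)
      _ ≤ y i := hyU i
    have hνlow : amin * c₀ ^ (m - 1) ≤ ν := by
      have h1 := heq istar
      rw [hystar, Real.one_rpow, mul_one] at h1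
      rw [← h1, Ax]
      obtain ⟨t₀, ht₀⟩ := harc istar
      calc amin * c₀ ^ (m - 1) ≤ A istar t₀ * ∏ j, y (t₀ j) := by
            apply mul_le_mul (hamin_le _ _ ht₀) _ (by positivity)
              (hA _ _)
            calc c₀ ^ (m - 1) = ∏ _j : Fin (m - 1), c₀ := by
                  rw [Finset.prod_const, Finset.card_univ, Fintype.card_fin]
            _ ≤ ∏ j, y (t₀ j) :=
                  Finset.prod_le_prod (fun j _ => hc₀pos.le) (fun j _ => hylow (t₀ j))
      _ ≤ ∑ t : Fin (m - 1) → Fin n, A istar t * ∏ j, y (t j) :=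
            Finset.single_le_sum (f := fun t => A istar t * ∏ j, y (t j))
              (fun t _ => mul_nonneg (hA istar t)
                (Finset.prod_nonneg fun j _ => (hypos _).le))
              (Finset.mem_univ t₀)
    exact ⟨y, ν, q, hylow, hypos, hyle1, hνlow, hνK, hqd, hqup, heq⟩
  -- pass to the limit
  choose yk νk qk hy1 hy2 hy3 hν1 hν2 hq1 hq2 heqk using hstep
  set Sset : Set ((Fin n → ℝ) × ℝ) :=
    (Set.univ.pi fun _ : Fin n => Set.Icc c₀ 1) ×ˢ Set.Icc (amin * c₀ ^ (m - 1)) Kmax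
    with hSset
  have hScomp : IsCompact Sset :=
    (isCompact_univ_pi fun _ => isCompact_Icc).prod isCompact_Icc
  have hmemS : ∀ k, (yk k, νk k) ∈ Sset := by
    intro k
    constructor
    · intro i _
      exact ⟨hy1 k i, hy3 k i⟩
    · exact ⟨hν1 k, hν2 k⟩
  obtain ⟨⟨v, lam⟩, hvlamS, φ, hφ, htend⟩ := hScomp.tendsto_subseq hmemS
  have hv : ∀ i, 0 < v i := by
    intro i
    have := hvlamS.1 i (Set.mem_univ i)
    exact lt_of_lt_of_le hc₀pos this.1
  have hlam0 : 0 < lam := by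
    have := hvlamS.2.1
    calc (0:ℝ) < amin * c₀ ^ (m - 1) := by positivity
    _ ≤ lam := this
  have htendy : Filter.Tendsto (fun j => yk (φ j)) Filter.atTop (nhds v) :=
    (continuous_fst.tendsto _).comp htend
  have htendν : Filter.Tendsto (fun j => νk (φ j)) Filter.atTop (nhds lam) :=
    (continuous_snd.tendsto _).comp htend
  have htendyi : ∀ i, Filter.Tendsto (fun j => yk (φ j) i) Filter.atTop (nhds (v i)) :=
    fun i => tendsto_pi_nhds.mp htendy i
  have hφtop : Filter.Tendsto φ Filter.atTop Filter.atTop := hφ.tendsto_atTop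
  have htendq : Filter.Tendsto (fun j => qk (φ j)) Filter.atTop (nhds ((m - 1 : ℕ) : ℝ)) := by
    apply tendsto_of_tendsto_of_tendsto_of_le_of_le
      (g := fun _ : ℕ => ((m - 1 : ℕ) : ℝ))
      (h := fun j => ((m - 1 : ℕ) : ℝ) * (1 + 1 / (φ j + 1)))
      tendsto_const_nhds _ (fun j => hq1 (φ j)) (fun j => hq2 (φ j))
    have h1 : Filter.Tendsto (fun j : ℕ => 1 / ((φ j : ℝ) + 1)) Filter.atTop (nhds 0) :=
      (tendsto_one_div_add_atTop_nhds_zero_nat).comp hφtop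
    have h2 : Filter.Tendsto (fun j : ℕ => ((m - 1 : ℕ) : ℝ) * (1 + 1 / (φ j + 1)))
        Filter.atTop (nhds (((m - 1 : ℕ) : ℝ) * (1 + 0))) :=
      (tendsto_const_nhds.add h1).const_mul _
    simpa using h2
  have heig : ∀ i, Ax m n A v i = lam * v i ^ (m - 1) := by
    intro i
    have hcont : Continuous (fun y : Fin n → ℝ => Ax m n A y i) := by
      unfold Ax
      apply continuous_finset_sum
      intro t _
      exact continuous_const.mul (continuous_finset_prod _ fun j' _ => continuous_apply (t j'))
    have hLHS : Filter.Tendsto (fun j => Ax m n A (yk (φ j)) i) Filter.atTop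
        (nhds (Ax m n A v i)) := (hcont.tendsto v).comp htendy
    have hRHS : Filter.Tendsto (fun j => νk (φ j) * yk (φ j) i ^ qk (φ j)) Filter.atTop
        (nhds (lam * v i ^ ((m - 1 : ℕ) : ℝ))) :=
      htendν.mul ((htendyi i).rpow htendq (Or.inl (ne_of_gt (hv i))))
    have hRHS' : Filter.Tendsto (fun j => Ax m n A (yk (φ j)) i) Filter.atTop
        (nhds (lam * v i ^ ((m - 1 : ℕ) : ℝ))) := by
      have : (fun j => Ax m n A (yk (φ j)) i) = fun j => νk (φ j) * yk (φ j) i ^ qk (φ j) := by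
        funext j
        exact heqk (φ j) i
      rw [this]
      exact hRHS
    have := tendsto_nhds_unique hLHS hRHS'
    rw [this, Real.rpow_natCast]
  exact ⟨v, lam, hv, hlam0, heig⟩

lemma specRad_eq_lam (hm : 2 ≤ m) (hn : 0 < n)
    (A : Fin n → (Fin (m - 1) → Fin n) → ℝ) (hA : ∀ i t, 0 ≤ A i t)
    (v : Fin n → ℝ) (lam : ℝ) (hv : ∀ i, 0 < v i) (hlam : 0 < lam)
    (heig : ∀ i, Ax m n A v i = lam * v i ^ (m - 1)) :
    specRad m n A = lam := by
  classical
  have hmem : lam ∈ {r : ℝ | ∃ lam' : ℂ, IsEig m n A lam' ∧ ‖lam'‖ = r} := by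
    refine ⟨(lam : ℂ), ⟨fun i => (v i : ℂ), ?_, ?_⟩, ?_⟩
    · intro h0
      have h1 : ((v ⟨0, hn⟩ : ℝ) : ℂ) = 0 := congrFun h0 ⟨0, hn⟩
      rw [Complex.ofReal_eq_zero] at h1
      exact (hv ⟨0, hn⟩).ne' h1
    · intro i
      have h := congrArg (fun r : ℝ => (r : ℂ)) (heig i)
      simp only [Ax] at h
      push_cast at h
      exact h
    · simp [abs_of_pos hlam]
  have hub : ∀ r ∈ {r : ℝ | ∃ lam' : ℂ, IsEig m n A lam' ∧ ‖lam'‖ = r}, r ≤ lam := by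
    rintro r ⟨μ, ⟨z, hz0, hzeq⟩, rfl⟩
    obtain ⟨i₀, -, hi₀⟩ := Finset.exists_max_image Finset.univ
      (fun i => ‖z i‖ / v i) ⟨⟨0, hn⟩, Finset.mem_univ _⟩
    set cmax := ‖z i₀‖ / v i₀ with hcmax
    have hle : ∀ i, ‖z i‖ ≤ cmax * v i := by
      intro i
      have h1 := hi₀ i (Finset.mem_univ i)
      rwa [div_le_iff₀ (hv i)] at h1
    have hc0 : 0 < cmax := by
      obtain ⟨i₁, hi₁⟩ : ∃ i, z i ≠ 0 := by
        by_contra hno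
        push_neg at hno
        exact hz0 (funext hno)
      have h2 : 0 < ‖z i₁‖ / v i₁ :=
        div_pos (by simpa using hi₁) (hv i₁)
      exact lt_of_lt_of_le h2 (hi₀ i₁ (Finset.mem_univ _))
    have hzi₀ : ‖z i₀‖ = cmax * v i₀ := by
      rw [hcmax, div_mul_cancel₀ _ (ne_of_gt (hv i₀))]
    have key : ‖μ‖ * ‖z i₀‖ ^ (m - 1)
        ≤ lam * ‖z i₀‖ ^ (m - 1) := by
      have h1 : ‖μ * z i₀ ^ (m - 1)‖
          = ‖μ‖ * ‖z i₀‖ ^ (m - 1) := by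
        rw [norm_mul, norm_pow]
      rw [← h1, ← hzeq i₀]
      calc ‖∑ t : Fin (m - 1) → Fin n, (A i₀ t : ℂ) * ∏ j, z (t j)‖
          ≤ ∑ t : Fin (m - 1) → Fin n, ‖(A i₀ t : ℂ) * ∏ j, z (t j)‖ :=
            norm_sum_le _ _
      _ ≤ ∑ t : Fin (m - 1) → Fin n, A i₀ t * (cmax ^ (m - 1) * ∏ j, v (t j)) := by
          apply Finset.sum_le_sum
          intro t _
          rw [norm_mul, Complex.norm_of_nonneg (hA i₀ t), norm_prod]
          apply mul_le_mul_of_nonneg_left _ (hA i₀ t)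
          calc (∏ j, ‖z (t j)‖) ≤ ∏ j, cmax * v (t j) :=
                Finset.prod_le_prod (fun j _ => (norm_nonneg _))
                  (fun j _ => hle (t j))
          _ = cmax ^ (m - 1) * ∏ j, v (t j) := by
                rw [Finset.prod_mul_distrib, Finset.prod_const, Finset.card_univ,
                  Fintype.card_fin]
      _ = cmax ^ (m - 1) * Ax m n A v i₀ := by
          rw [Ax, Finset.mul_sum]
          exact Finset.sum_congr rfl fun t _ => by ring
      _ = cmax ^ (m - 1) * (lam * v i₀ ^ (m - 1)) := by rw [heig i₀]
      _ = lam * (cmax * v i₀) ^ (m - 1) := by rw [mul_pow]; ring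
      _ = lam * ‖z i₀‖ ^ (m - 1) := by rw [hzi₀]
    have hpos : 0 < ‖z i₀‖ ^ (m - 1) := by
      apply pow_pos
      rw [hzi₀]
      exact mul_pos hc0 (hv i₀)
    exact le_of_mul_le_mul_right key hpos
  exact IsGreatest.csSup_eq ⟨hmem, hub⟩

lemma step_max (hm : 2 ≤ m) (A : Fin n → (Fin (m - 1) → Fin n) → ℝ) (hA : ∀ i t, 0 ≤ A i t)
    (v : Fin n → ℝ) (lam : ℝ) (hv : ∀ i, 0 < v i) (hlam : 0 < lam)
    (heig : ∀ i, Ax m n A v i = lam * v i ^ (m - 1))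
    (x : Fin n → ℝ) (hx : ∀ i, 0 < x i) (i : Fin n) :
    ∃ j, tArc m n A i j ∧
      lam * (v i / x i) ^ (m - 1) ≤ (Ax m n A x i / x i ^ (m - 1)) * (v j / x j) ^ (m - 1) := by
  classical
  have hd1 : 1 ≤ m - 1 := by omega
  have hwpos : ∀ i, 0 < v i / x i := fun i => div_pos (hv i) (hx i)
  set N : Finset (Fin n) := Finset.univ.filter (fun j => tArc m n A i j) with hN
  have hNmem : ∀ (t : Fin (m - 1) → Fin n), A i t ≠ 0 → ∀ j', t j' ∈ N := by
    intro t ht j'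
    exact Finset.mem_filter.mpr ⟨Finset.mem_univ _, ⟨t, ht, ⟨j', rfl⟩⟩⟩
  have hNne : N.Nonempty := by
    have hpos : 0 < Ax m n A v i := by
      rw [heig i]; exact mul_pos hlam (pow_pos (hv i) _)
    by_contra hne
    rw [Finset.not_nonempty_iff_eq_empty] at hne
    have hz : Ax m n A v i = 0 := by
      rw [Ax]
      apply Finset.sum_eq_zero
      intro t _
      by_cases ht : A i t = 0
      · rw [ht, zero_mul]
      · exact absurd (hne ▸ hNmem t ht ⟨0, by omega⟩) (Finset.notMem_empty _)
    exact absurd hz (ne_of_gt hpos)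
  obtain ⟨j₀, hj₀N, hj₀⟩ := Finset.exists_max_image N (fun j => v j / x j) hNne
  refine ⟨j₀, (Finset.mem_filter.mp hj₀N).2, ?_⟩
  have key : Ax m n A v i ≤ Ax m n A x i * (v j₀ / x j₀) ^ (m - 1) := by
    rw [Ax, Ax, Finset.sum_mul]
    apply Finset.sum_le_sum
    intro t _
    by_cases ht : A i t = 0
    · simp [ht]
    · calc A i t * ∏ j', v (t j')
          = A i t * ((∏ j', x (t j')) * ∏ j', (v (t j') / x (t j'))) := by
            rw [← Finset.prod_mul_distrib]
            congr 1
            refine Finset.prod_congr rfl fun j' _ => ?_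
            rw [mul_comm]
            exact (div_mul_cancel₀ _ (ne_of_gt (hx _))).symm
      _ ≤ A i t * ((∏ j', x (t j')) * (v j₀ / x j₀) ^ (m - 1)) := by
          apply mul_le_mul_of_nonneg_left _ (hA i t)
          apply mul_le_mul_of_nonneg_left _
            (Finset.prod_nonneg fun j' _ => (hx _).le)
          calc (∏ j', (v (t j') / x (t j'))) ≤ ∏ _j' : Fin (m - 1), (v j₀ / x j₀) :=
                Finset.prod_le_prod (fun j' _ => (hwpos _).le)
                  (fun j' _ => hj₀ (t j') (hNmem t ht j'))
          _ = (v j₀ / x j₀) ^ (m - 1) := by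
                rw [Finset.prod_const, Finset.card_univ, Fintype.card_fin]
      _ = A i t * (∏ j', x (t j')) * (v j₀ / x j₀) ^ (m - 1) := by ring
  have hvw : v i ^ (m - 1) = (v i / x i) ^ (m - 1) * x i ^ (m - 1) := by
    rw [← mul_pow]
    congr 1
    exact (div_mul_cancel₀ _ (ne_of_gt (hx i))).symm
  have h3 : (lam * (v i / x i) ^ (m - 1)) * x i ^ (m - 1)
      ≤ ((Ax m n A x i / x i ^ (m - 1)) * (v j₀ / x j₀) ^ (m - 1)) * x i ^ (m - 1) := by
    calc (lam * (v i / x i) ^ (m - 1)) * x i ^ (m - 1)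
        = lam * v i ^ (m - 1) := by rw [hvw]; ring
    _ = Ax m n A v i := (heig i).symm
    _ ≤ Ax m n A x i * (v j₀ / x j₀) ^ (m - 1) := key
    _ = (Ax m n A x i / x i ^ (m - 1)) * x i ^ (m - 1) * (v j₀ / x j₀) ^ (m - 1) := by
        rw [div_mul_cancel₀ _ (ne_of_gt (pow_pos (hx i) (m - 1)))]
    _ = ((Ax m n A x i / x i ^ (m - 1)) * (v j₀ / x j₀) ^ (m - 1)) * x i ^ (m - 1) := by
        ring
  exact le_of_mul_le_mul_right h3 (pow_pos (hx i) _)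

/-- One-step comparison (min side). -/
lemma step_min (hm : 2 ≤ m) (A : Fin n → (Fin (m - 1) → Fin n) → ℝ) (hA : ∀ i t, 0 ≤ A i t)
    (v : Fin n → ℝ) (lam : ℝ) (hv : ∀ i, 0 < v i) (hlam : 0 < lam)
    (heig : ∀ i, Ax m n A v i = lam * v i ^ (m - 1))
    (x : Fin n → ℝ) (hx : ∀ i, 0 < x i) (i : Fin n) :
    ∃ j, tArc m n A i j ∧
      (Ax m n A x i / x i ^ (m - 1)) * (v j / x j) ^ (m - 1) ≤ lam * (v i / x i) ^ (m - 1) := by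
  classical
  have hd1 : 1 ≤ m - 1 := by omega
  have hwpos : ∀ i, 0 < v i / x i := fun i => div_pos (hv i) (hx i)
  set N : Finset (Fin n) := Finset.univ.filter (fun j => tArc m n A i j) with hN
  have hNmem : ∀ (t : Fin (m - 1) → Fin n), A i t ≠ 0 → ∀ j', t j' ∈ N := by
    intro t ht j'
    exact Finset.mem_filter.mpr ⟨Finset.mem_univ _, ⟨t, ht, ⟨j', rfl⟩⟩⟩
  have hNne : N.Nonempty := by
    have hpos : 0 < Ax m n A v i := by
      rw [heig i]; exact mul_pos hlam (pow_pos (hv i) _)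
    by_contra hne
    rw [Finset.not_nonempty_iff_eq_empty] at hne
    have hz : Ax m n A v i = 0 := by
      rw [Ax]
      apply Finset.sum_eq_zero
      intro t _
      by_cases ht : A i t = 0
      · rw [ht, zero_mul]
      · exact absurd (hne ▸ hNmem t ht ⟨0, by omega⟩) (Finset.notMem_empty _)
    exact absurd hz (ne_of_gt hpos)
  obtain ⟨j₀, hj₀N, hj₀⟩ := Finset.exists_min_image N (fun j => v j / x j) hNne
  refine ⟨j₀, (Finset.mem_filter.mp hj₀N).2, ?_⟩
  have key : Ax m n A x i * (v j₀ / x j₀) ^ (m - 1) ≤ Ax m n A v i := by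
    rw [Ax, Ax, Finset.sum_mul]
    apply Finset.sum_le_sum
    intro t _
    by_cases ht : A i t = 0
    · simp [ht]
    · calc A i t * (∏ j', x (t j')) * (v j₀ / x j₀) ^ (m - 1)
          = A i t * ((∏ j', x (t j')) * (v j₀ / x j₀) ^ (m - 1)) := by ring
      _ ≤ A i t * ((∏ j', x (t j')) * ∏ j', (v (t j') / x (t j'))) := by
          apply mul_le_mul_of_nonneg_left _ (hA i t)
          apply mul_le_mul_of_nonneg_left _
            (Finset.prod_nonneg fun j' _ => (hx _).le)
          calc (v j₀ / x j₀) ^ (m - 1) = ∏ _j' : Fin (m - 1), (v j₀ / x j₀) := by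
                rw [Finset.prod_const, Finset.card_univ, Fintype.card_fin]
          _ ≤ ∏ j', (v (t j') / x (t j')) :=
                Finset.prod_le_prod (fun j' _ => (hwpos j₀).le)
                  (fun j' _ => hj₀ (t j') (hNmem t ht j'))
      _ = A i t * ∏ j', v (t j') := by
            rw [← Finset.prod_mul_distrib]
            congr 1
            refine Finset.prod_congr rfl fun j' _ => ?_
            rw [mul_comm]
            exact div_mul_cancel₀ _ (ne_of_gt (hx _))
  have hvw : v i ^ (m - 1) = (v i / x i) ^ (m - 1) * x i ^ (m - 1) := by
    rw [← mul_pow]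
    congr 1
    exact (div_mul_cancel₀ _ (ne_of_gt (hx i))).symm
  have h3 : ((Ax m n A x i / x i ^ (m - 1)) * (v j₀ / x j₀) ^ (m - 1)) * x i ^ (m - 1)
      ≤ (lam * (v i / x i) ^ (m - 1)) * x i ^ (m - 1) := by
    calc ((Ax m n A x i / x i ^ (m - 1)) * (v j₀ / x j₀) ^ (m - 1)) * x i ^ (m - 1)
        = (Ax m n A x i / x i ^ (m - 1)) * x i ^ (m - 1) * (v j₀ / x j₀) ^ (m - 1) := by
          ring
    _ = Ax m n A x i * (v j₀ / x j₀) ^ (m - 1) := by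
          rw [div_mul_cancel₀ _ (ne_of_gt (pow_pos (hx i) (m - 1)))]
    _ ≤ Ax m n A v i := key
    _ = lam * v i ^ (m - 1) := heig i
    _ = (lam * (v i / x i) ^ (m - 1)) * x i ^ (m - 1) := by rw [hvw]; ring
  exact le_of_mul_le_mul_right h3 (pow_pos (hx i) _)

lemma circuit_bound_core (hm : 2 ≤ m) (hn : 0 < n)
    (A : Fin n → (Fin (m - 1) → Fin n) → ℝ)
    (g : ℕ) (hg : IsLeast {p : ℕ | ∃ γ : ℕ → Fin n, IsCircuit (tArc m n A) p γ} g)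
    (w : Fin n → ℝ) (hw : ∀ i, 0 < w i)
    (f : Fin n → Fin n) (hfarc : ∀ i, tArc m n A i (f i)) :
    ∃ (c : ℕ → Fin n) (P : ℕ), 0 < P ∧ P ≤ n ∧ g ≤ P ∧
      (∀ k, c (k + 1) = f (c k)) ∧ c P = c 0 ∧
      (∃ u : Finset (Fin n), u.card = P ∧
        ∀ K : Fin n → ℝ, (∏ i ∈ u, K i) = ∏ k ∈ Finset.range P, K (c k)) := by
  classical
  obtain ⟨y, P, hP0, hPn, hPfix, hdist⟩ := exists_cycle hn f
  set c : ℕ → Fin n := fun k => f^[k] y with hc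
  have hcsucc : ∀ k, c (k + 1) = f (c k) := fun k => Function.iterate_succ_apply' f k y
  have hcP : c P = c 0 := by
    show f^[P] y = f^[0] y
    simp [hPfix]
  have hgP : g ≤ P := hg.2 ⟨c, hP0, hcP, fun j _ => by rw [hcsucc]; exact hfarc (c j)⟩
  have hinj : Set.InjOn c ↑(Finset.range P) := by
    intro k hk l hl hkl
    by_contra hne
    rcases Nat.lt_or_ge k l with h | h
    · exact hdist k l h (by simpa using hl) hkl
    · exact hdist l k (by omega) (by simpa using hk) hkl.symm
  refine ⟨c, P, hP0, hPn, hgP, hcsucc, hcP,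
    ⟨(Finset.range P).image c, ?_, fun K => Finset.prod_image fun k hk l hl => hinj hk hl⟩⟩
  rw [Finset.card_image_of_injOn hinj, Finset.card_range]

lemma circuit_bound_max (hm : 2 ≤ m) (hn : 0 < n)
    (A : Fin n → (Fin (m - 1) → Fin n) → ℝ) (hA : ∀ i t, 0 ≤ A i t)
    (g : ℕ) (hg : IsLeast {p : ℕ | ∃ γ : ℕ → Fin n, IsCircuit (tArc m n A) p γ} g)
    (v : Fin n → ℝ) (lam : ℝ) (hv : ∀ i, 0 < v i) (hlam : 0 < lam)
    (heig : ∀ i, Ax m n A v i = lam * v i ^ (m - 1))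
    (x : Fin n → ℝ) (hx : ∀ i, 0 < x i) :
    ∃ u : Finset (Fin n), u.card = g ∧ lam ^ g ≤ ∏ i ∈ u, Ax m n A x i / x i ^ (m - 1) := by
  classical
  have hg0 : 0 < g := hg.1.choose_spec.1
  set K : Fin n → ℝ := fun i => Ax m n A x i / x i ^ (m - 1) with hK
  have hKnn : ∀ i, 0 ≤ K i := by
    intro i
    apply div_nonneg _ (le_of_lt (pow_pos (hx i) _))
    exact Finset.sum_nonneg fun t _ => mul_nonneg (hA i t)
      (Finset.prod_nonneg fun j _ => le_of_lt (hx (t j)))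
  set w : Fin n → ℝ := fun i => v i / x i with hw
  have hwpos : ∀ i, 0 < w i := fun i => div_pos (hv i) (hx i)
  choose f hfarc hfle using step_max hm A hA v lam hv hlam heig x hx
  obtain ⟨c, P, hP0, hPn, hgP, hcsucc, hcP, u, hucard, huprod⟩ :=
    circuit_bound_core hm hn A g hg w hwpos f hfarc
  have hprodP : lam ^ P ≤ ∏ k ∈ Finset.range P, K (c k) := by
    have h1 : ∏ k ∈ Finset.range P, (lam * w (c k) ^ (m - 1))
        ≤ ∏ k ∈ Finset.range P, (K (c k) * w (c (k + 1)) ^ (m - 1)) := by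
      apply Finset.prod_le_prod
      · intro k _
        exact mul_nonneg hlam.le (pow_nonneg (hwpos _).le _)
      · intro k _
        rw [hcsucc k]
        exact hfle (c k)
    rw [Finset.prod_mul_distrib, Finset.prod_mul_distrib, Finset.prod_const,
      Finset.card_range,
      cycle_shift_prod c P hcP (fun i => w i ^ (m - 1))
        (ne_of_gt (pow_pos (hwpos _) _))] at h1
    exact le_of_mul_le_mul_right h1
      (Finset.prod_pos fun k _ => pow_pos (hwpos _) _)
  obtain ⟨s, hscard, hs⟩ := sub_max hlam K hKnn g hg0 P u hucard
    (by rw [hucard]; exact hgP) (by rw [hucard, huprod K]; exact hprodP)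
  exact ⟨s, hscard, hs⟩

lemma circuit_bound_min (hm : 2 ≤ m) (hn : 0 < n)
    (A : Fin n → (Fin (m - 1) → Fin n) → ℝ) (hA : ∀ i t, 0 ≤ A i t)
    (g : ℕ) (hg : IsLeast {p : ℕ | ∃ γ : ℕ → Fin n, IsCircuit (tArc m n A) p γ} g)
    (v : Fin n → ℝ) (lam : ℝ) (hv : ∀ i, 0 < v i) (hlam : 0 < lam)
    (heig : ∀ i, Ax m n A v i = lam * v i ^ (m - 1))
    (x : Fin n → ℝ) (hx : ∀ i, 0 < x i) :
    ∃ u : Finset (Fin n), u.card = g ∧ (∏ i ∈ u, Ax m n A x i / x i ^ (m - 1)) ≤ lam ^ g := by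
  classical
  have hg0 : 0 < g := hg.1.choose_spec.1
  set K : Fin n → ℝ := fun i => Ax m n A x i / x i ^ (m - 1) with hK
  have hKnn : ∀ i, 0 ≤ K i := by
    intro i
    apply div_nonneg _ (le_of_lt (pow_pos (hx i) _))
    exact Finset.sum_nonneg fun t _ => mul_nonneg (hA i t)
      (Finset.prod_nonneg fun j _ => le_of_lt (hx (t j)))
  set w : Fin n → ℝ := fun i => v i / x i with hw
  have hwpos : ∀ i, 0 < w i := fun i => div_pos (hv i) (hx i)
  choose f hfarc hfle using step_min hm A hA v lam hv hlam heig x hx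
  obtain ⟨c, P, hP0, hPn, hgP, hcsucc, hcP, u, hucard, huprod⟩ :=
    circuit_bound_core hm hn A g hg w hwpos f hfarc
  have hprodP : (∏ k ∈ Finset.range P, K (c k)) ≤ lam ^ P := by
    have h1 : ∏ k ∈ Finset.range P, (K (c k) * w (c (k + 1)) ^ (m - 1))
        ≤ ∏ k ∈ Finset.range P, (lam * w (c k) ^ (m - 1)) := by
      apply Finset.prod_le_prod
      · intro k _
        exact mul_nonneg (hKnn _) (pow_nonneg (hwpos _).le _)
      · intro k _
        rw [hcsucc k]
        exact hfle (c k)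
    rw [Finset.prod_mul_distrib, Finset.prod_mul_distrib, Finset.prod_const,
      Finset.card_range,
      cycle_shift_prod c P hcP (fun i => w i ^ (m - 1))
        (ne_of_gt (pow_pos (hwpos _) _))] at h1
    exact le_of_mul_le_mul_right h1
      (Finset.prod_pos fun k _ => pow_pos (hwpos _) _)
  obtain ⟨s, hscard, hs⟩ := sub_min hlam K hKnn g hg0 P u hucard
    (by rw [hucard]; exact hgP) (by rw [hucard, huprod K]; exact hprodP)
  exact ⟨s, hscard, hs⟩

end Aux

theorem stmt15 (m n : ℕ) (hm : 2 ≤ m) (hn : 0 < n)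
    (A : Fin n → (Fin (m - 1) → Fin n) → ℝ) (hA : ∀ i t, 0 ≤ A i t)
    (hirr : StronglyConnected (tArc m n A))
    (g : ℕ) (hg : IsLeast {p : ℕ | ∃ γ : ℕ → Fin n, IsCircuit (tArc m n A) p γ} g) :
    specRad m n A = sInf {r : ℝ | ∃ x : Fin n → ℝ, (∀ i, 0 < x i) ∧
        r = (sSup {s : ℝ | ∃ u : Finset (Fin n), u.card = g ∧
              s = ∏ i ∈ u, Ax m n A x i / x i ^ (m - 1)}) ^ ((g : ℝ)⁻¹)} ∧
    specRad m n A = sSup {r : ℝ | ∃ x : Fin n → ℝ, (∀ i, 0 < x i) ∧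
        r = (sInf {s : ℝ | ∃ u : Finset (Fin n), u.card = g ∧
              s = ∏ i ∈ u, Ax m n A x i / x i ^ (m - 1)}) ^ ((g : ℝ)⁻¹)} := by
  classical
  have hg0 : 0 < g := (hg.1.choose_spec).1
  obtain ⟨v, lam, hv, hlam, heig⟩ := exists_perron hm hn A hA
    (exists_out_arc A hirr g hg) hirr
  have hspec : specRad m n A = lam := specRad_eq_lam hm hn A hA v lam hv hlam heig
  -- slice sums of the scaled tensor
  set K : (Fin n → ℝ) → Fin n → ℝ := fun x i => Ax m n A x i / x i ^ (m - 1) with hK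
  have hKnn : ∀ (x : Fin n → ℝ), (∀ i, 0 < x i) → ∀ i, 0 ≤ K x i := by
    intro x hx i
    apply div_nonneg _ (le_of_lt (pow_pos (hx i) _))
    exact Finset.sum_nonneg fun t _ => mul_nonneg (hA i t)
      (Finset.prod_nonneg fun j _ => le_of_lt (hx (t j)))
  have hKv : ∀ i, K v i = lam := by
    intro i
    rw [hK]; simp only
    rw [heig i, mul_div_assoc, div_self (ne_of_gt (pow_pos (hv i) _)), mul_one]
  -- g ≤ n
  obtain ⟨u₀, hu₀card, hu₀⟩ := circuit_bound_max hm hn A hA g hg v lam hv hlam heig v hv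
  have hgn : g ≤ n := by
    calc g = u₀.card := hu₀card.symm
    _ ≤ (Finset.univ : Finset (Fin n)).card := Finset.card_le_univ _
    _ = n := by simp
  -- the inner sets
  set Inn : (Fin n → ℝ) → Set ℝ := fun x =>
    {s : ℝ | ∃ u : Finset (Fin n), u.card = g ∧ s = ∏ i ∈ u, Ax m n A x i / x i ^ (m - 1)}
    with hInn
  have hInnFin : ∀ x, (Inn x).Finite := by
    intro x
    have : Inn x ⊆ (fun u : Finset (Fin n) => ∏ i ∈ u, Ax m n A x i / x i ^ (m - 1)) ''
        Set.univ := by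
      rintro s ⟨u, -, rfl⟩; exact ⟨u, Set.mem_univ _, rfl⟩
    exact Set.Finite.subset (Set.Finite.image _ (Set.finite_univ)) this
  have hInnNe : ∀ x, (Inn x).Nonempty := by
    intro x
    obtain ⟨u, -, hu⟩ := Finset.exists_subset_card_eq (s := (Finset.univ : Finset (Fin n)))
      (n := g) (by simpa using hgn)
    exact ⟨_, u, hu, rfl⟩
  have hInnv : Inn v = {lam ^ g} := by
    ext s
    constructor
    · rintro ⟨u, hu, rfl⟩
      have : ∀ i ∈ u, Ax m n A v i / v i ^ (m - 1) = lam := fun i _ => hKv i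
      rw [Finset.prod_congr rfl this, Finset.prod_const, hu]
      rfl
    · rintro rfl
      obtain ⟨u, -, hu⟩ := Finset.exists_subset_card_eq (s := (Finset.univ : Finset (Fin n)))
        (n := g) (by simpa using hgn)
      refine ⟨u, hu, ?_⟩
      have : ∀ i ∈ u, Ax m n A v i / v i ^ (m - 1) = lam := fun i _ => hKv i
      rw [Finset.prod_congr rfl this, Finset.prod_const, hu]
  have hgR : (g : ℝ) ≠ 0 := Nat.cast_ne_zero.mpr hg0.ne'
  have hpow : (lam ^ g : ℝ) ^ ((g : ℝ)⁻¹) = lam := by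
    rw [← Real.rpow_natCast lam g, ← Real.rpow_mul hlam.le,
      mul_inv_cancel₀ hgR, Real.rpow_one]
  constructor
  · -- min side
    rw [hspec]
    have hmemb : lam ∈ {r : ℝ | ∃ x : Fin n → ℝ, (∀ i, 0 < x i) ∧
        r = (sSup (Inn x)) ^ ((g : ℝ)⁻¹)} := by
      refine ⟨v, hv, ?_⟩
      rw [hInnv, csSup_singleton, hpow]
    have hlb : ∀ r ∈ {r : ℝ | ∃ x : Fin n → ℝ, (∀ i, 0 < x i) ∧
        r = (sSup (Inn x)) ^ ((g : ℝ)⁻¹)}, lam ≤ r := by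
      rintro r ⟨x, hx, rfl⟩
      obtain ⟨u, hucard, hub⟩ := circuit_bound_max hm hn A hA g hg v lam hv hlam heig x hx
      have h1 : lam ^ g ≤ sSup (Inn x) :=
        le_trans hub (le_csSup (Set.Finite.bddAbove (hInnFin x)) ⟨u, hucard, rfl⟩)
      calc lam = (lam ^ g : ℝ) ^ ((g : ℝ)⁻¹) := hpow.symm
      _ ≤ (sSup (Inn x)) ^ ((g : ℝ)⁻¹) :=
        Real.rpow_le_rpow (pow_nonneg hlam.le _) h1 (by positivity)
    exact le_antisymm (le_csInf ⟨lam, hmemb⟩ hlb) (csInf_le ⟨lam, hlb⟩ hmemb)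
  · -- max side
    rw [hspec]
    have h0le : ∀ x : Fin n → ℝ, (∀ i, 0 < x i) → 0 ≤ sInf (Inn x) := by
      intro x hx
      apply le_csInf (hInnNe x)
      rintro s ⟨u, -, rfl⟩
      exact Finset.prod_nonneg fun i _ => hKnn x hx i
    have hmemb : lam ∈ {r : ℝ | ∃ x : Fin n → ℝ, (∀ i, 0 < x i) ∧
        r = (sInf (Inn x)) ^ ((g : ℝ)⁻¹)} := by
      refine ⟨v, hv, ?_⟩
      rw [hInnv, csInf_singleton, hpow]
    have hub : ∀ r ∈ {r : ℝ | ∃ x : Fin n → ℝ, (∀ i, 0 < x i) ∧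
        r = (sInf (Inn x)) ^ ((g : ℝ)⁻¹)}, r ≤ lam := by
      rintro r ⟨x, hx, rfl⟩
      obtain ⟨u, hucard, hub'⟩ := circuit_bound_min hm hn A hA g hg v lam hv hlam heig x hx
      have h1 : sInf (Inn x) ≤ lam ^ g :=
        le_trans (csInf_le (Set.Finite.bddBelow (hInnFin x)) ⟨u, hucard, rfl⟩) hub'
      calc (sInf (Inn x)) ^ ((g : ℝ)⁻¹) ≤ (lam ^ g : ℝ) ^ ((g : ℝ)⁻¹) :=
        Real.rpow_le_rpow (h0le x hx) h1 (by positivity)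
      _ = lam := hpow
    exact le_antisymm (le_csSup ⟨lam, hub⟩ hmemb) (csSup_le ⟨lam, hmemb⟩ hub)
end

section
/- Let A be a nonnegative weakly irreducible tensor of order m and dimension n, and let x be a positive eigenvector of A corresponding to rho(A). If gamma = (i_1, i_2, ..., i_p, i_{p+1} = i_1) is a circuit in G_A such that for each j, x_{i_{j+1}} = max{x_k : k is an out-neighbor of i_j}, then rho(A) <= (prod_{j=1}^p K_{i_j})^{1/p}, where K_i is the i-th slice sum of A. -/
open scoped BigOperators
open Finset

theorem stmt16 (m n : ℕ) (hm : 2 ≤ m) (hn : 0 < n)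
    (A : Fin n → (Fin (m - 1) → Fin n) → ℝ) (hA : ∀ i t, 0 ≤ A i t)
    (hirr : StronglyConnected (tArc m n A))
    (x : Fin n → ℝ) (hx : ∀ i, 0 < x i)
    (heig : ∀ i : Fin n, Ax m n A x i = specRad m n A * x i ^ (m - 1))
    (p : ℕ) (γ : ℕ → Fin n) (hγ : IsCircuit (tArc m n A) p γ)
    (hmax : ∀ j < p, ∀ u : Fin n, tArc m n A (γ j) u → x u ≤ x (γ (j + 1))) :
    specRad m n A ≤ (∏ j ∈ Finset.range p, sliceSum m n A (γ j)) ^ ((p : ℝ)⁻¹) := by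
  obtain ⟨hp, hpc, -⟩ := hγ
  set ρ := specRad m n A with hρdef
  have hAxnn : ∀ i, 0 ≤ Ax m n A x i := fun i =>
    Finset.sum_nonneg fun t _ => mul_nonneg (hA i t) (Finset.prod_nonneg fun j _ => (hx _).le)
  have hρ0 : 0 ≤ ρ := by
    have i0 : Fin n := ⟨0, hn⟩
    have h := heig i0
    nlinarith [hAxnn i0, pow_pos (hx i0) (m - 1)]
  have key : ∀ j < p, ρ * x (γ j) ^ (m - 1) ≤
      sliceSum m n A (γ j) * x (γ (j + 1)) ^ (m - 1) := by
    intro j hj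
    rw [← heig]
    unfold Ax sliceSum
    rw [Finset.sum_mul]
    apply Finset.sum_le_sum
    intro t _
    by_cases ht : A (γ j) t = 0
    · simp [ht]
    · have hb : ∀ k, x (t k) ≤ x (γ (j + 1)) := fun k =>
        hmax j hj (t k) ⟨t, ht, ⟨k, rfl⟩⟩
      have hpr : (∏ k, x (t k)) ≤ x (γ (j + 1)) ^ (m - 1) := by
        calc (∏ k, x (t k)) ≤ ∏ _k : Fin (m - 1), x (γ (j + 1)) :=
              Finset.prod_le_prod (fun k _ => (hx _).le) (fun k _ => hb k)
          _ = x (γ (j + 1)) ^ (m - 1) := by simp [Finset.prod_const]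
      exact mul_le_mul_of_nonneg_left hpr (hA _ t)
  set g : ℕ → ℝ := fun j => x (γ j) ^ (m - 1) with hg
  have hgpos : ∀ j, 0 < g j := fun j => pow_pos (hx _) _
  have hprod : ∏ j ∈ Finset.range p, (ρ * g j) ≤
      ∏ j ∈ Finset.range p, (sliceSum m n A (γ j) * g (j + 1)) :=
    Finset.prod_le_prod (fun j _ => mul_nonneg hρ0 (hgpos j).le)
      (fun j hj => key j (Finset.mem_range.mp hj))
  have hshift : ∏ j ∈ Finset.range p, g (j + 1) = ∏ j ∈ Finset.range p, g j := by
    have h1 := Finset.prod_range_succ' g p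
    have h2 := Finset.prod_range_succ g p
    have hgp : g p = g 0 := by simp [hg, hpc]
    have h0 : g 0 ≠ 0 := (hgpos 0).ne'
    apply mul_right_cancel₀ h0
    rw [← h1, h2, hgp]
  have hX : 0 < ∏ j ∈ Finset.range p, g j :=
    Finset.prod_pos fun j _ => hgpos j
  have hρp : ρ ^ p ≤ ∏ j ∈ Finset.range p, sliceSum m n A (γ j) := by
    have hL : ∏ j ∈ Finset.range p, (ρ * g j) = ρ ^ p * ∏ j ∈ Finset.range p, g j := by
      rw [Finset.prod_mul_distrib, Finset.prod_const, Finset.card_range]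
    have hR : ∏ j ∈ Finset.range p, (sliceSum m n A (γ j) * g (j + 1)) =
        (∏ j ∈ Finset.range p, sliceSum m n A (γ j)) * ∏ j ∈ Finset.range p, g j := by
      rw [Finset.prod_mul_distrib, hshift]
    rw [hL, hR] at hprod
    exact le_of_mul_le_mul_right hprod hX
  have hpow : 0 ≤ ρ ^ p := pow_nonneg hρ0 p
  have := Real.rpow_le_rpow hpow hρp (by positivity : (0:ℝ) ≤ (p : ℝ)⁻¹)
  calc ρ = ((ρ ^ p : ℝ)) ^ ((p : ℝ)⁻¹) := by
        rw [← Real.rpow_natCast ρ p, ← Real.rpow_mul hρ0,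
          mul_inv_cancel₀ (by exact_mod_cast hp.ne' : (p : ℝ) ≠ 0), Real.rpow_one]
    _ ≤ (∏ j ∈ Finset.range p, sliceSum m n A (γ j)) ^ ((p : ℝ)⁻¹) := this
end

section
/- Let M be an n x n nonnegative matrix whose associated digraph G_M (arc (i,j) iff m_{ij} != 0) is strongly connected, with row sums r_1,...,r_n. Then min over circuits gamma in G_M of (prod_{i in gamma} r_i)^{1/|gamma|} <= rho(M) <= max over circuits gamma in G_M of (prod_{i in gamma} r_i)^{1/|gamma|}. -/
set_option maxHeartbeats 1000000


open scoped BigOperators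
open Finset

/-- The spectral radius of a real square matrix: the supremum of the moduli of
    its complex eigenvalues. -/
noncomputable def mSpecRad (n : ℕ) (M : Matrix (Fin n) (Fin n) ℝ) : ℝ :=
  sSup {r : ℝ | ∃ lam : ℂ, lam ∈ spectrum ℂ (M.map (Complex.ofReal)) ∧ ‖lam‖ = r}


namespace Stmt18Aux

open Filter
open scoped ENNReal NNReal Topology

variable {n : ℕ}

lemma pow_entry_nonneg {M : Matrix (Fin n) (Fin n) ℝ} (hM : ∀ i j, 0 ≤ M i j) :
    ∀ k i j, 0 ≤ (M ^ k) i j := by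
  intro k
  induction k with
  | zero => intro i j; rw [pow_zero]; by_cases h : i = j <;> simp [Matrix.one_apply, h]
  | succ k ih =>
    intro i j
    rw [pow_succ, Matrix.mul_apply]
    exact Finset.sum_nonneg fun l _ => mul_nonneg (ih i l) (hM l j)

lemma mem_spectrum_iff {A : Matrix (Fin n) (Fin n) ℂ} {lam : ℂ} :
    lam ∈ spectrum ℂ A ↔ ∃ v, v ≠ 0 ∧ A.mulVec v = lam • v := by
  classical
  rw [spectrum.mem_iff, Matrix.isUnit_iff_isUnit_det, isUnit_iff_ne_zero, not_ne_iff,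
    ← Matrix.exists_mulVec_eq_zero_iff]
  constructor
  · rintro ⟨v, hv, h⟩
    refine ⟨v, hv, ?_⟩
    rw [Matrix.sub_mulVec, Algebra.algebraMap_eq_smul_one, Matrix.smul_mulVec,
      Matrix.one_mulVec] at h
    exact (sub_eq_zero.mp h).symm
  · rintro ⟨v, hv, h⟩
    refine ⟨v, hv, ?_⟩
    rw [Matrix.sub_mulVec, Algebra.algebraMap_eq_smul_one, Matrix.smul_mulVec,
      Matrix.one_mulVec, h, sub_self]

lemma spectrum_nonempty (hn : 0 < n) (A : Matrix (Fin n) (Fin n) ℂ) :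
    (spectrum ℂ A).Nonempty := by
  haveI : Nonempty (Fin n) := Fin.pos_iff_nonempty.mp hn
  obtain ⟨c, hc⟩ := Module.End.exists_eigenvalue (Matrix.toLinAlgEquiv (Pi.basisFun ℂ (Fin n)) A)
  exact ⟨c, (AlgEquiv.spectrum_eq (Matrix.toLinAlgEquiv (Pi.basisFun ℂ (Fin n))) A) ▸ hc.mem_spectrum⟩

lemma prod_chain_le {t : ℝ} (ht : 0 ≤ t) {r w : ℕ → ℝ} (hr : ∀ k, 0 ≤ r k)
    (h : ∀ k, r k * w (k + 1) ≤ t * w k) (a : ℕ) :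
    ∀ q, (∏ j ∈ Finset.range q, r (a + j)) * w (a + q) ≤ t ^ q * w a := by
  intro q
  induction q with
  | zero => simp
  | succ q ih =>
    have hprod : 0 ≤ ∏ j ∈ Finset.range q, r (a + j) :=
      Finset.prod_nonneg fun j _ => hr _
    have e : (∏ j ∈ Finset.range (q+1), r (a + j)) * w (a + (q+1))
        = (∏ j ∈ Finset.range q, r (a + j)) * (r (a + q) * w (a + q + 1)) := by
      rw [Finset.prod_range_succ, show a + (q+1) = a + q + 1 from rfl]; ring
    rw [e]
    calc (∏ j ∈ Finset.range q, r (a + j)) * (r (a + q) * w (a + q + 1))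
        ≤ (∏ j ∈ Finset.range q, r (a + j)) * (t * w (a + q)) :=
          mul_le_mul_of_nonneg_left (h (a + q)) hprod
      _ = t * ((∏ j ∈ Finset.range q, r (a + j)) * w (a + q)) := by ring
      _ ≤ t * (t ^ q * w a) := mul_le_mul_of_nonneg_left ih ht
      _ = t ^ (q+1) * w a := by ring

lemma le_prod_chain {t : ℝ} (ht : 0 ≤ t) {r w : ℕ → ℝ} (hr : ∀ k, 0 ≤ r k)
    (h : ∀ k, t * w k ≤ r k * w (k + 1)) (a : ℕ) :
    ∀ q, t ^ q * w a ≤ (∏ j ∈ Finset.range q, r (a + j)) * w (a + q) := by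
  intro q
  induction q with
  | zero => simp
  | succ q ih =>
    have hprod : 0 ≤ ∏ j ∈ Finset.range q, r (a + j) :=
      Finset.prod_nonneg fun j _ => hr _
    have e : (∏ j ∈ Finset.range (q+1), r (a + j)) * w (a + (q+1))
        = (∏ j ∈ Finset.range q, r (a + j)) * (r (a + q) * w (a + q + 1)) := by
      rw [Finset.prod_range_succ, show a + (q+1) = a + q + 1 from rfl]; ring
    rw [e]
    calc t ^ (q+1) * w a = t * (t ^ q * w a) := by ring
      _ ≤ t * ((∏ j ∈ Finset.range q, r (a + j)) * w (a + q)) :=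
          mul_le_mul_of_nonneg_left ih ht
      _ = (∏ j ∈ Finset.range q, r (a + j)) * (t * w (a + q)) := by ring
      _ ≤ (∏ j ∈ Finset.range q, r (a + j)) * (r (a + q) * w (a + q + 1)) :=
          mul_le_mul_of_nonneg_left (h (a + q)) hprod

lemma exists_circuit_iter {M : Matrix (Fin n) (Fin n) ℝ}
    (nxt : Fin n → Fin n) (harc : ∀ i, M i (nxt i) ≠ 0) (i0 : Fin n) :
    ∃ a p : ℕ, 0 < p ∧
      IsCircuit (fun i j : Fin n => M i j ≠ 0) p (fun j => nxt^[a + j] i0) := by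
  have key : ∀ x y : ℕ, x < y → nxt^[x] i0 = nxt^[y] i0 →
      ∃ a p : ℕ, 0 < p ∧
        IsCircuit (fun i j : Fin n => M i j ≠ 0) p (fun j => nxt^[a + j] i0) := by
    intro x y hlt heq
    refine ⟨x, y - x, Nat.sub_pos_of_lt hlt, Nat.sub_pos_of_lt hlt, ?_, ?_⟩
    · show nxt^[x + (y - x)] i0 = nxt^[x + 0] i0
      rw [Nat.add_sub_cancel' hlt.le, Nat.add_zero]
      exact heq.symm
    · intro j _
      show M (nxt^[x + j] i0) (nxt^[x + j + 1] i0) ≠ 0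
      rw [Function.iterate_succ_apply']
      exact harc _
  obtain ⟨x, y, hxy, hfeq⟩ := Fintype.exists_ne_map_eq_of_card_lt
      (fun k : Fin (n+1) => nxt^[(k : ℕ)] i0) (by simp)
  rcases (Fin.val_ne_of_ne hxy).lt_or_gt with hlt | hlt
  · exact key _ _ hlt hfeq
  · exact key _ _ hlt hfeq.symm

lemma sum_mul_filter {M : Matrix (Fin n) (Fin n) ℝ} (i : Fin n) (f : Fin n → ℝ) :
    ∑ j ∈ Finset.univ.filter (fun j => M i j ≠ 0), M i j * f j = ∑ j, M i j * f j :=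
  Finset.sum_filter_of_ne (fun x _ hx => left_ne_zero_of_mul hx)

lemma upper_chain {M : Matrix (Fin n) (Fin n) ℝ}
    (hM : ∀ i j, 0 ≤ M i j) (hrow : ∀ i, ∃ j, M i j ≠ 0) {lam : ℂ}
    (hlam : lam ∈ spectrum ℂ (M.map Complex.ofReal)) (hne : lam ≠ 0) :
    ∃ (p : ℕ) (γ : ℕ → Fin n), IsCircuit (fun i j : Fin n => M i j ≠ 0) p γ ∧
      ‖lam‖ ≤ (∏ j ∈ Finset.range p, (∑ l : Fin n, M (γ j) l)) ^ ((p : ℝ)⁻¹) := by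
  classical
  obtain ⟨v, hv0, hv⟩ := mem_spectrum_iff.mp hlam
  have hNi : ∀ i : Fin n, (Finset.univ.filter (fun j => M i j ≠ 0)).Nonempty := by
    intro i
    obtain ⟨j, hj⟩ := hrow i
    exact ⟨j, Finset.mem_filter.mpr ⟨Finset.mem_univ _, hj⟩⟩
  have hmax := fun i => Finset.exists_max_image (Finset.univ.filter (fun j => M i j ≠ 0))
    (fun j => ‖v j‖) (hNi i)
  choose nxt hmem hbig using hmax
  have harc : ∀ i, M i (nxt i) ≠ 0 := fun i => (Finset.mem_filter.mp (hmem i)).2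
  have heig : ∀ i, ∑ j, (M i j : ℂ) * v j = lam * v i := by
    intro i
    have := congrFun hv i
    simpa [Matrix.mulVec, dotProduct, Matrix.map_apply] using this
  have hstep : ∀ i, ‖lam‖ * ‖v i‖
      ≤ (∑ l, M i l) * ‖v (nxt i)‖ := by
    intro i
    calc ‖lam‖ * ‖v i‖ = ‖lam * v i‖ := (norm_mul _ _).symm
      _ = ‖∑ j, (M i j : ℂ) * v j‖ := by rw [heig]
      _ ≤ ∑ j, ‖(M i j : ℂ) * v j‖ := norm_sum_le _ _
      _ = ∑ j, M i j * ‖v j‖ := by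
          refine Finset.sum_congr rfl fun j _ => ?_
          rw [norm_mul, Complex.norm_of_nonneg (hM i j)]
      _ = ∑ j ∈ Finset.univ.filter (fun j => M i j ≠ 0), M i j * ‖v j‖ :=
          (sum_mul_filter i _).symm
      _ ≤ ∑ j ∈ Finset.univ.filter (fun j => M i j ≠ 0), M i j * ‖v (nxt i)‖ :=
          Finset.sum_le_sum fun j hj => mul_le_mul_of_nonneg_left (hbig i j hj) (hM i j)
      _ = ∑ j, M i j * ‖v (nxt i)‖ := sum_mul_filter i _
      _ = (∑ l, M i l) * ‖v (nxt i)‖ := by rw [Finset.sum_mul]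
  obtain ⟨i0, hi0⟩ := Function.ne_iff.mp hv0
  obtain ⟨a, p, hp, hcirc⟩ := exists_circuit_iter nxt harc i0
  set w : ℕ → ℝ := fun k => ‖v (nxt^[k] i0)‖ with hw
  have hiter : ∀ k, nxt^[k + 1] i0 = nxt (nxt^[k] i0) := fun k =>
    Function.iterate_succ_apply' nxt k i0
  have hchain : ∀ k, ‖lam‖ * w k ≤ (∑ l, M (nxt^[k] i0) l) * w (k + 1) := by
    intro k
    have := hstep (nxt^[k] i0)
    rw [hw]
    simpa [hiter k] using this
  have hwpos : ∀ k, 0 < w k := by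
    intro k
    induction k with
    | zero => simpa [hw] using norm_pos_iff.mpr hi0
    | succ k ih =>
      have h1 : 0 < ‖lam‖ * w k :=
        mul_pos (norm_pos_iff.mpr hne) ih
      have h2 := lt_of_lt_of_le h1 (hchain k)
      have h3 : 0 ≤ w (k + 1) := norm_nonneg _
      rcases h3.lt_or_eq with h | h
      · exact h
      · exfalso; rw [← h, mul_zero] at h2; exact lt_irrefl 0 h2
  have hR : ∀ k, 0 ≤ ∑ l, M (nxt^[k] i0) l := fun k =>
    Finset.sum_nonneg fun l _ => hM _ l
  have key := le_prod_chain (norm_nonneg lam) hR hchain a p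
  have hwap : w (a + p) = w a := by
    have := hcirc.2.1
    simp only [hw]
    rw [show nxt^[a + p] i0 = (fun j => nxt^[a + j] i0) p from rfl, this]
    simp
  rw [hwap] at key
  have hpow : ‖lam‖ ^ p ≤ ∏ j ∈ Finset.range p, ∑ l, M (nxt^[a + j] i0) l :=
    le_of_mul_le_mul_right key (hwpos a)
  refine ⟨p, fun j => nxt^[a + j] i0, hcirc, ?_⟩
  have h1 : ‖lam‖ = (‖lam‖ ^ p) ^ ((p : ℝ)⁻¹) :=
    (Real.pow_rpow_inv_natCast (norm_nonneg _) hp.ne').symm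
  rw [h1]
  exact Real.rpow_le_rpow (pow_nonneg (norm_nonneg _) _) hpow
    (inv_nonneg.mpr (Nat.cast_nonneg _))

lemma lower_chain {M : Matrix (Fin n) (Fin n) ℝ}
    (hM : ∀ i j, 0 ≤ M i j) (hrow : ∀ i, ∃ j, M i j ≠ 0) {t : ℝ} (ht : 0 < t)
    {y : Fin n → ℝ} (hy : ∀ i, 0 < y i) (hMy : ∀ i, ∑ j, M i j * y j ≤ t * y i)
    (hn : 0 < n) :
    ∃ (p : ℕ) (γ : ℕ → Fin n), IsCircuit (fun i j : Fin n => M i j ≠ 0) p γ ∧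
      (∏ j ∈ Finset.range p, (∑ l : Fin n, M (γ j) l)) ^ ((p : ℝ)⁻¹) ≤ t := by
  classical
  have hNi : ∀ i : Fin n, (Finset.univ.filter (fun j => M i j ≠ 0)).Nonempty := by
    intro i
    obtain ⟨j, hj⟩ := hrow i
    exact ⟨j, Finset.mem_filter.mpr ⟨Finset.mem_univ _, hj⟩⟩
  have hmin := fun i => Finset.exists_min_image (Finset.univ.filter (fun j => M i j ≠ 0))
    (fun j => y j) (hNi i)
  choose nxt hmem hsml using hmin
  have harc : ∀ i, M i (nxt i) ≠ 0 := fun i => (Finset.mem_filter.mp (hmem i)).2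
  have hstep : ∀ i, (∑ l, M i l) * y (nxt i) ≤ t * y i := by
    intro i
    calc (∑ l, M i l) * y (nxt i) = ∑ l, M i l * y (nxt i) := by rw [Finset.sum_mul]
      _ = ∑ l ∈ Finset.univ.filter (fun j => M i j ≠ 0), M i l * y (nxt i) :=
          (sum_mul_filter i _).symm
      _ ≤ ∑ l ∈ Finset.univ.filter (fun j => M i j ≠ 0), M i l * y l :=
          Finset.sum_le_sum fun l hl => mul_le_mul_of_nonneg_left (hsml i l hl) (hM i l)
      _ = ∑ l, M i l * y l := sum_mul_filter i _
      _ ≤ t * y i := hMy i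
  obtain ⟨i0⟩ : Nonempty (Fin n) := Fin.pos_iff_nonempty.mp hn
  obtain ⟨a, p, hp, hcirc⟩ := exists_circuit_iter nxt harc i0
  set w : ℕ → ℝ := fun k => y (nxt^[k] i0) with hw
  have hiter : ∀ k, nxt^[k + 1] i0 = nxt (nxt^[k] i0) := fun k =>
    Function.iterate_succ_apply' nxt k i0
  have hchain : ∀ k, (∑ l, M (nxt^[k] i0) l) * w (k + 1) ≤ t * w k := by
    intro k
    have := hstep (nxt^[k] i0)
    rw [hw]
    simpa [hiter k] using this
  have hR : ∀ k, 0 ≤ ∑ l, M (nxt^[k] i0) l := fun k =>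
    Finset.sum_nonneg fun l _ => hM _ l
  have key := prod_chain_le ht.le hR hchain a p
  have hwap : w (a + p) = w a := by
    have := hcirc.2.1
    simp only [hw]
    rw [show nxt^[a + p] i0 = (fun j => nxt^[a + j] i0) p from rfl, this]
    simp
  rw [hwap] at key
  have hpow : ∏ j ∈ Finset.range p, (∑ l, M (nxt^[a + j] i0) l) ≤ t ^ p :=
    le_of_mul_le_mul_right key (hw ▸ hy _)
  refine ⟨p, fun j => nxt^[a + j] i0, hcirc, ?_⟩
  have h1 : t = (t ^ p) ^ ((p : ℝ)⁻¹) :=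
    (Real.pow_rpow_inv_natCast ht.le hp.ne').symm
  calc (∏ j ∈ Finset.range p, (∑ l : Fin n, M ((fun j => nxt^[a + j] i0) j) l)) ^ ((p : ℝ)⁻¹)
      ≤ (t ^ p) ^ ((p : ℝ)⁻¹) :=
        Real.rpow_le_rpow (Finset.prod_nonneg fun j _ => hR _) hpow
          (inv_nonneg.mpr (Nat.cast_nonneg _))
    _ = t := h1.symm

lemma eventual_rowsum {M : Matrix (Fin n) (Fin n) ℝ} (hM : ∀ i j, 0 ≤ M i j)
    {r s : ℝ} (hr : 0 ≤ r) (hrs : r < s)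
    (hspec : ∀ lam ∈ spectrum ℂ (M.map Complex.ofReal), ‖lam‖ ≤ r) :
    ∃ N : ℕ, ∀ k ≥ N, ∀ i, ∑ j, (M ^ k) i j ≤ s ^ k := by
  classical
  set A := M.map Complex.ofReal with hA
  have hs : 0 < s := lt_of_le_of_lt hr hrs
  letI : NormedRing (Matrix (Fin n) (Fin n) ℂ) := Matrix.linftyOpNormedRing
  letI : NormedAlgebra ℂ (Matrix (Fin n) (Fin n) ℂ) := Matrix.linftyOpNormedAlgebra
  haveI : CompleteSpace (Matrix (Fin n) (Fin n) ℂ) :=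
    FiniteDimensional.complete ℂ (Matrix (Fin n) (Fin n) ℂ)
  have hrad : spectralRadius ℂ A < ENNReal.ofReal s := by
    have h1 : spectralRadius ℂ A ≤ ENNReal.ofReal r := by
      rw [spectralRadius]
      refine iSup₂_le fun lam hlam => ?_
      rw [← ENNReal.ofReal_coe_nnreal, coe_nnnorm]
      exact ENNReal.ofReal_le_ofReal (hspec lam hlam)
    exact lt_of_le_of_lt h1 ((ENNReal.ofReal_lt_ofReal_iff hs).mpr hrs)
  have hlim := spectrum.pow_nnnorm_pow_one_div_tendsto_nhds_spectralRadius A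
  have hev : ∀ᶠ k : ℕ in atTop, (‖A ^ k‖₊ : ℝ≥0∞) ^ (1 / (k : ℝ)) < ENNReal.ofReal s :=
    hlim.eventually_lt_const hrad
  have hgood : ∀ᶠ k : ℕ in atTop, ∀ i, ∑ j, (M ^ k) i j ≤ s ^ k := by
    filter_upwards [hev, eventually_ge_atTop 1] with k hk hk1 i
    have hkR : (0 : ℝ) < (k : ℝ) := by exact_mod_cast hk1
    have h2 : (‖A ^ k‖₊ : ℝ≥0∞) < (ENNReal.ofReal s) ^ (k : ℕ) := by
      have h := ENNReal.rpow_lt_rpow hk (by positivity : (0:ℝ) < (k:ℝ))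
      rw [← ENNReal.rpow_mul, one_div, inv_mul_cancel₀ (ne_of_gt hkR), ENNReal.rpow_one,
        ENNReal.rpow_natCast] at h
      exact h
    have h3 : ‖A ^ k‖ ≤ s ^ k := by
      rw [← ENNReal.ofReal_pow hs.le, ← ENNReal.ofReal_coe_nnreal, coe_nnnorm] at h2
      exact le_of_lt ((ENNReal.ofReal_lt_ofReal_iff_of_nonneg (norm_nonneg _)).mp h2)
    refine le_trans ?_ h3
    have hmap : A ^ k = (M ^ k).map Complex.ofReal := by
      rw [hA]
      have h4 := map_pow (Complex.ofRealHom.mapMatrix (m := Fin n)) M k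
      exact (by simpa [RingHom.mapMatrix_apply] using h4.symm :
        M.map (⇑Complex.ofRealHom) ^ k = (M ^ k).map ⇑Complex.ofRealHom)
    have hentry : ∀ i j, ‖(A ^ k) i j‖ = (M ^ k) i j := by
      intro i j
      rw [hmap]
      simp only [Matrix.map_apply, Complex.norm_real, Real.norm_eq_abs]
      exact abs_of_nonneg (pow_entry_nonneg hM k i j)
    rw [Matrix.linfty_opNorm_def]
    have hle : ∑ j, (M ^ k) i j ≤ ((Finset.univ.sup fun i => ∑ j, ‖(A ^ k) i j‖₊ : ℝ≥0) : ℝ) := by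
      have hsup := Finset.le_sup (f := fun i => ∑ j, ‖(A ^ k) i j‖₊) (Finset.mem_univ i)
      calc ∑ j, (M ^ k) i j = ∑ j, ‖(A ^ k) i j‖ := by
            exact Finset.sum_congr rfl fun j _ => (hentry i j).symm
        _ = ((∑ j, ‖(A ^ k) i j‖₊ : ℝ≥0) : ℝ) := by push_cast; rfl
        _ ≤ _ := by exact_mod_cast hsup
    exact hle
  exact eventually_atTop.mp hgood

lemma exists_pos_vec {M : Matrix (Fin n) (Fin n) ℝ} (hM : ∀ i j, 0 ≤ M i j)
    {t s : ℝ} (hs : 0 < s) (hst : s < t) (N : ℕ)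
    (hbd : ∀ k ≥ N, ∀ i, ∑ j, (M ^ k) i j ≤ s ^ k) :
    ∃ y : Fin n → ℝ, (∀ i, 0 < y i) ∧ ∀ i, ∑ j, M i j * y j ≤ t * y i := by
  have ht : 0 < t := hs.trans hst
  have hMk := pow_entry_nonneg hM
  set g : ℕ → Fin n → ℝ := fun k i => (∑ j, (M ^ k) i j) / t ^ k with hg
  have hgnn : ∀ k i, 0 ≤ g k i := fun k i =>
    div_nonneg (Finset.sum_nonneg fun j _ => hMk k i j) (pow_nonneg ht.le k)
  have hsumm : ∀ i, Summable fun k => g k i := by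
    intro i
    rw [← summable_nat_add_iff N]
    refine Summable.of_nonneg_of_le (fun k => hgnn _ i) (fun k => ?_)
      (((summable_geometric_of_lt_one (div_nonneg hs.le ht.le)
        ((div_lt_one ht).mpr hst)).mul_right ((s / t) ^ N)))
    have h1 : g (k + N) i ≤ s ^ (k + N) / t ^ (k + N) :=
      (div_le_div_iff_of_pos_right (pow_pos ht _)).mpr (hbd (k + N) (Nat.le_add_left _ _) i)
    calc g (k + N) i ≤ s ^ (k + N) / t ^ (k + N) := h1
      _ = (s / t) ^ k * (s / t) ^ N := by rw [← div_pow, pow_add]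
  refine ⟨fun i => ∑' k, g k i, fun i => ?_, fun i => ?_⟩
  · have h0 : g 0 i = 1 := by
      simp [hg, Matrix.one_apply]
    have := (hsumm i).le_tsum 0 fun j _ => hgnn j i
    rw [h0] at this
    exact lt_of_lt_of_le one_pos this
  · have key : ∀ k, ∑ j, M i j * g k j = t * g (k + 1) i := by
      intro k
      have e1 : ∑ j, M i j * ∑ l, (M ^ k) j l = ∑ l, (M ^ (k+1)) i l := by
        have hMc : (M ^ (k + 1)) = M * M ^ k := by rw [pow_succ']
        simp_rw [hMc, Matrix.mul_apply, Finset.mul_sum]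
        exact Finset.sum_comm
      have e2 : t * g (k + 1) i = (∑ l, (M ^ (k+1)) i l) / t ^ k := by
        simp only [hg]
        field_simp
        ring
      calc ∑ j, M i j * g k j
          = (∑ j, M i j * ∑ l, (M ^ k) j l) / t ^ k := by
            simp only [hg]
            rw [Finset.sum_div]; exact Finset.sum_congr rfl fun j _ => (mul_div_assoc _ _ _).symm
        _ = (∑ l, (M ^ (k+1)) i l) / t ^ k := by rw [e1]
        _ = t * g (k + 1) i := e2.symm
    calc ∑ j, M i j * ∑' k, g k j = ∑ j, ∑' k, M i j * g k j := by
          refine Finset.sum_congr rfl fun j _ => (tsum_mul_left).symm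
      _ = ∑' k, ∑ j, M i j * g k j := (Summable.tsum_finsetSum fun j _ => (hsumm j).mul_left _).symm
      _ = ∑' k, t * g (k + 1) i := by simp_rw [key]
      _ = t * ∑' k, g (k + 1) i := tsum_mul_left
      _ ≤ t * ∑' k, g k i := by
          refine mul_le_mul_of_nonneg_left ?_ ht.le
          rw [(hsumm i).tsum_eq_zero_add]
          exact le_add_of_nonneg_left (hgnn 0 i)

end Stmt18Aux

theorem stmt18 (n : ℕ) (hn : 0 < n) (M : Matrix (Fin n) (Fin n) ℝ)
    (hM : ∀ i j, 0 ≤ M i j)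
    (hirr : StronglyConnected (fun i j : Fin n => M i j ≠ 0)) :
    sInf {r : ℝ | ∃ (p : ℕ) (γ : ℕ → Fin n), IsCircuit (fun i j : Fin n => M i j ≠ 0) p γ ∧
        r = (∏ j ∈ Finset.range p, (∑ l : Fin n, M (γ j) l)) ^ ((p : ℝ)⁻¹)}
      ≤ mSpecRad n M ∧
    mSpecRad n M ≤
      sSup {r : ℝ | ∃ (p : ℕ) (γ : ℕ → Fin n), IsCircuit (fun i j : Fin n => M i j ≠ 0) p γ ∧
        r = (∏ j ∈ Finset.range p, (∑ l : Fin n, M (γ j) l)) ^ ((p : ℝ)⁻¹)} := by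
  classical
  set S : Set ℝ := {r : ℝ | ∃ (p : ℕ) (γ : ℕ → Fin n), IsCircuit (fun i j : Fin n => M i j ≠ 0) p γ ∧
      r = (∏ j ∈ Finset.range p, (∑ l : Fin n, M (γ j) l)) ^ ((p : ℝ)⁻¹)} with hSdef
  set E : Set ℝ := {r : ℝ | ∃ lam : ℂ,
      lam ∈ spectrum ℂ (M.map Complex.ofReal) ∧ ‖lam‖ = r} with hEdef
  have hmE : mSpecRad n M = sSup E := rfl
  rw [hmE]
  have hSnn : ∀ x ∈ S, 0 ≤ x := by
    rintro x ⟨p, γ, hc, rfl⟩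
    exact Real.rpow_nonneg
      (Finset.prod_nonneg fun j _ => Finset.sum_nonneg fun l _ => hM _ l) _
  by_cases hM0 : ∀ i j, M i j = 0
  · have hMc : M.map Complex.ofReal = 0 := by
      ext i j; simp [Matrix.map_apply, hM0]
    haveI : Nonempty (Fin n) := Fin.pos_iff_nonempty.mp hn
    have hspec : spectrum ℂ (M.map Complex.ofReal) = {0} := by
      rw [hMc]; exact spectrum.zero_eq
    have hE : E = {0} := by
      rw [hEdef]
      ext r
      simp [hspec]
    have hS : S = ∅ := by
      rw [hSdef]
      ext x
      simp only [Set.mem_setOf_eq, Set.mem_empty_iff_false, iff_false, not_exists]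
      rintro p γ ⟨⟨hp, _, harc⟩, _⟩
      exact (harc 0 hp) (hM0 _ _)
    rw [hS, hE, Real.sInf_empty, Real.sSup_empty, csSup_singleton]
    exact ⟨le_rfl, le_rfl⟩
  · push_neg at hM0
    obtain ⟨i0, j0, h00⟩ := hM0
    have hrow : ∀ i, ∃ j, M i j ≠ 0 := by
      intro i
      rcases (hirr i i0).cases_head with heq | ⟨c, hc, _⟩
      · exact ⟨j0, by rw [heq]; exact h00⟩
      · exact ⟨c, hc⟩
    set B : ℝ := ∑ i, ∑ l, M i l with hB
    have hBnn : 0 ≤ B := Finset.sum_nonneg fun i _ => Finset.sum_nonneg fun l _ => hM i l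
    have hrowB : ∀ i, ∑ l, M i l ≤ B :=
      fun i => Finset.single_le_sum (f := fun i => ∑ l, M i l)
        (fun i _ => Finset.sum_nonneg fun l _ => hM i l) (Finset.mem_univ i)
    have hSbdd : ∀ x ∈ S, x ≤ B := by
      rintro x ⟨p, γ, hc, rfl⟩
      have h1 : ∏ j ∈ Finset.range p, (∑ l : Fin n, M (γ j) l) ≤ B ^ p := by
        calc ∏ j ∈ Finset.range p, (∑ l : Fin n, M (γ j) l)
            ≤ ∏ _j ∈ Finset.range p, B :=
              Finset.prod_le_prod (fun j _ => Finset.sum_nonneg fun l _ => hM _ l)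
                (fun j _ => hrowB _)
          _ = B ^ p := by rw [Finset.prod_const, Finset.card_range]
      calc (∏ j ∈ Finset.range p, (∑ l : Fin n, M (γ j) l)) ^ ((p : ℝ)⁻¹)
          ≤ (B ^ p) ^ ((p : ℝ)⁻¹) :=
            Real.rpow_le_rpow
              (Finset.prod_nonneg fun j _ => Finset.sum_nonneg fun l _ => hM _ l) h1
              (inv_nonneg.mpr (Nat.cast_nonneg _))
        _ = B := Real.pow_rpow_inv_natCast hBnn hc.1.ne'
    have hSbddAbove : BddAbove S := ⟨B, fun x hx => hSbdd x hx⟩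
    have hSne : S.Nonempty := by
      have harc : ∀ i, M i ((hrow i).choose) ≠ 0 := fun i => (hrow i).choose_spec
      obtain ⟨a, p, hp, hcirc⟩ :=
        Stmt18Aux.exists_circuit_iter (fun i => (hrow i).choose) harc i0
      exact ⟨_, p, _, hcirc, rfl⟩
    have hEbdd : BddAbove E := by
      refine ⟨B, ?_⟩
      rintro e ⟨lam, hlam, rfl⟩
      by_cases hlam0 : lam = 0
      · subst hlam0; simpa using hBnn
      · obtain ⟨p, γ, hcirc, hle⟩ := Stmt18Aux.upper_chain hM hrow hlam hlam0
        exact le_trans hle (hSbdd _ ⟨p, γ, hcirc, rfl⟩)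
    have hEne : E.Nonempty := by
      obtain ⟨lam, hlam⟩ := Stmt18Aux.spectrum_nonempty hn (M.map Complex.ofReal)
      exact ⟨‖lam‖, lam, hlam, rfl⟩
    have hρnn : 0 ≤ sSup E := by
      obtain ⟨e, lam, hlam, rfl⟩ := hEne
      exact le_trans (norm_nonneg lam) (le_csSup hEbdd ⟨lam, hlam, rfl⟩)
    constructor
    · by_contra hcon
      push_neg at hcon
      obtain ⟨t, ht1, ht2⟩ := exists_between hcon
      obtain ⟨s', hs1, hs2⟩ := exists_between ht1
      have hs'pos : 0 < s' := lt_of_le_of_lt hρnn hs1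
      have hspec : ∀ lam ∈ spectrum ℂ (M.map Complex.ofReal), ‖lam‖ ≤ sSup E :=
        fun lam h => le_csSup hEbdd ⟨lam, h, rfl⟩
      obtain ⟨N, hN⟩ := Stmt18Aux.eventual_rowsum hM hρnn hs1 hspec
      obtain ⟨y, hy, hMy⟩ := Stmt18Aux.exists_pos_vec hM hs'pos hs2 N hN
      obtain ⟨p, γ, hcirc, hle⟩ :=
        Stmt18Aux.lower_chain hM hrow (lt_of_le_of_lt hρnn ht1) hy hMy hn
      have hfin : sInf S ≤ t :=
        le_trans (csInf_le ⟨0, fun x hx => hSnn x hx⟩ ⟨p, γ, hcirc, rfl⟩) hle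
      exact absurd hfin (not_le.mpr ht2)
    · refine csSup_le hEne ?_
      rintro e ⟨lam, hlam, rfl⟩
      by_cases hlam0 : lam = 0
      · subst hlam0
        simp only [norm_zero]
        obtain ⟨x, hx⟩ := hSne
        exact le_trans (hSnn x hx) (le_csSup hSbddAbove hx)
      · obtain ⟨p, γ, hcirc, hle⟩ := Stmt18Aux.upper_chain hM hrow hlam hlam0
        exact le_trans hle (le_csSup hSbddAbove ⟨p, γ, hcirc, rfl⟩)
end
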